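/- arXiv:1106.0051 — 5 statements merged into one kernel-verified Lean document; each statement's English description precedes it below -/
import Mathlib

section
/- The set of upper Lyapunov exponents attained on the exceptional set equals the closed interval [log β⁻, log β⁺]; that is, {χ̄(p,ξ) : (p,ξ) ∈ E} = [log β⁻, log β⁺]. -/
open Set Filter MeasureTheory

noncomputable section

/-- Condition (F0) on the fiber map `f₀`. -/
def F0cond (f₀ : ℝ → ℝ) (β₀ lam₀ : ℝ) : Prop :=
  ContDiff ℝ 1 f₀ ∧ Set.MapsTo f₀ (Set.Icc 0 1) (Set.Icc 0 1) ∧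
  StrictMonoOn f₀ (Set.Icc 0 1) ∧ f₀ 0 = 0 ∧ f₀ 1 = 1 ∧
  (∀ x ∈ Set.Ioo (0:ℝ) 1, x < f₀ x) ∧
  deriv f₀ 0 = β₀ ∧ 1 < β₀ ∧ deriv f₀ 1 = lam₀ ∧ 0 < lam₀ ∧ lam₀ < 1 ∧
  (∀ x ∈ Set.Icc (0:ℝ) 1, lam₀ ≤ deriv f₀ x)

/-- Condition (F1) on the fiber map `f₁`. -/
def F1cond (f₁ : ℝ → ℝ) (γ lam₀ : ℝ) : Prop :=
  (∀ x, f₁ x = γ * (1 - x)) ∧ lam₀ ≤ γ ∧ γ < 1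

/-- Condition (F2) on the fiber map `f₂`. -/
def F2cond (f₂ : ℝ → ℝ) (β₂ lam₀ : ℝ) : Prop :=
  ContDiff ℝ 1 f₂ ∧ Set.MapsTo f₂ (Set.Icc 0 1) (Set.Icc 0 1) ∧
  StrictMonoOn f₂ (Set.Icc 0 1) ∧ f₂ 0 = 0 ∧
  deriv f₂ 0 = β₂ ∧ 1 < β₂ ∧ (∀ x ∈ Set.Icc (0:ℝ) 1, lam₀ ≤ deriv f₂ x) ∧
  ∃ p₂, p₂ ∈ Set.Ioo (0:ℝ) 1 ∧ f₂ p₂ = p₂ ∧ (∀ x ∈ Set.Ioo 0 p₂, x < f₂ x) ∧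
    (∀ x ∈ Set.Ioc p₂ 1, f₂ x < x)

/-- Condition (F01). -/
def F01cond (f₀ : ℝ → ℝ) (β₀ lam₀ γ : ℝ) : Prop :=
  AntitoneOn (deriv f₀) (Set.Icc 0 1) ∧
  1 < γ * (lam₀ ^ 3 * (1 - lam₀) / (1 - β₀⁻¹))

/-- Condition (F012), with `H = [0,δ]`, `H' = [1-γ⁻¹δ,1]`, and the derived constants
`β' = βpr`, `β_H = βH`, `λ' = lampr`, `L`. -/
def F012cond (f₀ f₁ f₂ : ℝ → ℝ) (γ lam₀ β₀ β₂ δ βpr βH lampr : ℝ) (L : ℕ) : Prop :=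
  (∀ x ∈ Set.Icc (0:ℝ) 1, deriv f₀ x ≤ max β₀ β₂ ∧ deriv f₂ x ≤ max β₀ β₂) ∧
  0 < δ ∧ δ < γ ∧
  (f₁ '' Set.Icc 0 δ) ∩ Set.Icc 0 δ = ∅ ∧
  (f₁ '' Set.Icc (1 - γ⁻¹ * δ) 1) ∩ Set.Icc (1 - γ⁻¹ * δ) 1 = ∅ ∧
  (f₁ '' Set.Icc 0 1) ∩ Set.Icc (1 - γ⁻¹ * δ) 1 = ∅ ∧
  (f₂ '' Set.Icc 0 1) ∩ Set.Icc (1 - γ⁻¹ * δ) 1 = ∅ ∧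
  IsGreatest {y | ∃ x ∈ Set.Icc δ 1, y = max (deriv f₀ x) (deriv f₂ x)} βpr ∧
  1 < βpr ∧ βpr < min β₀ β₂ ∧
  IsLeast {y | ∃ x ∈ Set.Icc (0:ℝ) δ, y = min (deriv f₀ x) (deriv f₂ x)} βH ∧
  1 < βH ∧ βH < min β₀ β₂ ∧
  IsGreatest {y | ∃ x ∈ Set.Icc (1 - γ⁻¹ * δ) 1, y = deriv f₀ x} lampr ∧
  lampr < 1 ∧
  |Real.log lam₀| * Real.log (max β₀ β₂) / Real.log βH - |Real.log lampr|
      + (2 / 3) * Real.log (max β₀ β₂) < (3 / 4) * Real.log βpr ∧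
  1 ≤ L ∧
  4 * |Real.log lam₀| * Real.log (max β₀ β₂) / (Real.log βH * Real.log βpr) < (L : ℝ) ∧
  Real.log ((max β₀ β₂) ^ L * γ) / ((L : ℝ) + 1) < Real.log βpr

/-- `f_{ξ_{n-1}} ∘ ⋯ ∘ f_{ξ₀}`. -/
def seqComp (fs : Fin 3 → ℝ → ℝ) (ξ : ℕ → Fin 3) : ℕ → ℝ → ℝ
  | 0 => id
  | n + 1 => fun x => fs (ξ n) (seqComp fs ξ n x)

/-- The upper Lyapunov exponent of the point `p` under the itinerary `ξ`. -/
def lyapUpper (fs : Fin 3 → ℝ → ℝ) (p : ℝ) (ξ : ℕ → Fin 3) : ℝ :=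
  Filter.limsup (fun n : ℕ => (1 / (n : ℝ)) * Real.log |deriv (seqComp fs ξ n) p|) Filter.atTop

/-- Membership in the exceptional set `E`. -/
def exceptional (fs : Fin 3 → ℝ → ℝ) (p : ℝ) (ξ : ℕ → Fin 3) : Prop :=
  ∃ m : ℕ, seqComp fs ξ m p = 0 ∧ ∀ j, m ≤ j → (ξ j = 0 ∨ ξ j = 2)

/-- `f_[w] = f_{w_{m-1}} ∘ ⋯ ∘ f_{w₀}` for a finite word `w`. -/
def wordComp {α : Type*} (fs : α → ℝ → ℝ) (w : List α) : ℝ → ℝ :=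
  fun x => w.foldl (fun y i => fs i y) x

/-- The two-sided sequence space `Σ₃`. -/
abbrev Sig3 := ℤ → Fin 3

/-- The state space `Σ₃ × [0,1]`. -/
abbrev XSp := Sig3 × (Set.Icc (0:ℝ) 1)

instance : UniformSpace (Fin 3) := ⊥

/-- The left shift on `Σ₃`. -/
def shiftMap (ξ : Sig3) : Sig3 := fun i => ξ (i + 1)

/-- The step skew product `G(ξ,x) = (σξ, f_{ξ₀}(x))` on `Σ₃ × [0,1]`. -/
def Gmap (fs : Fin 3 → ℝ → ℝ) : XSp → XSp :=
  fun p => (shiftMap p.1, Set.projIcc 0 1 (by norm_num) (fs (p.1 0) (p.2 : ℝ)))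

/-- The maximal invariant set `Λ_G = ⋂ₙ Gⁿ(Σ₃ × [0,1])`. -/
def LamG (fs : Fin 3 → ℝ → ℝ) : Set XSp := ⋂ n : ℕ, (Gmap fs)^[n] '' Set.univ

/-- The lateral horseshoe `Λ₀₂`. -/
def Lam02 : Set XSp := {p | (∀ i, p.1 i ≠ 1) ∧ (p.2 : ℝ) = 0}

/-- The central derivative potential `φ(ξ,x) = log|f_{ξ₀}'(x)|`. -/
def phiC (fs : Fin 3 → ℝ → ℝ) (p : XSp) : ℝ := Real.log |deriv (fs (p.1 0)) (p.2 : ℝ)|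

/-- The central Lyapunov exponent `χ(μ) = ∫ φ dμ` of a measure. -/
def chiOf (fs : Fin 3 → ℝ → ℝ) (μ : Measure XSp) : ℝ := ∫ p, phiC fs p ∂μ

/-- `ν` is the `(p 0, p 1, p 2)`-Bernoulli measure on `Σ₃`. -/
def IsBernoulli (p : Fin 3 → ℝ) (ν : Measure Sig3) : Prop :=
  IsProbabilityMeasure ν ∧ ∀ (s : Finset ℤ) (a : ℤ → Fin 3),
    ν {ξ | ∀ i ∈ s, ξ i = a i} = ENNReal.ofReal (∏ i ∈ s, p (a i))



namespace Stmt0Aux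

open Real

private lemma floor_ratio_tendsto (t : ℝ) :
    Tendsto (fun n : ℕ => (⌊(n:ℝ) * t⌋ : ℝ) / n) atTop (nhds t) := by
  have h1 : Tendsto (fun n : ℕ => t - 1 / (n:ℝ)) atTop (nhds t) := by
    simpa using tendsto_const_nhds.sub (tendsto_one_div_atTop_nhds_zero_nat (𝕜 := ℝ))
  refine tendsto_of_tendsto_of_tendsto_of_le_of_le' h1 tendsto_const_nhds ?_ ?_
  · filter_upwards [eventually_ge_atTop 1] with n hn
    have hn' : (0:ℝ) < n := by exact_mod_cast hn
    rw [sub_le_iff_le_add, ← add_div, le_div_iff₀ hn']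
    nlinarith [Int.lt_floor_add_one ((n:ℝ) * t)]
  · filter_upwards [eventually_ge_atTop 1] with n hn
    have hn' : (0:ℝ) < n := by exact_mod_cast hn
    rw [div_le_iff₀ hn']
    have := Int.floor_le ((n:ℝ) * t)
    linarith

private lemma cesaro_limsup_mem (g : ℕ → ℝ) (m : ℕ) (A B : ℝ)
    (hg : ∀ j, m ≤ j → g j ∈ Icc A B) :
    limsup (fun n : ℕ => (1/(n:ℝ)) * ∑ j ∈ Finset.range n, g j) atTop ∈ Icc A B := by
  set C : ℝ := ∑ j ∈ Finset.range m, g j with hC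
  set a : ℕ → ℝ := fun n => (1/(n:ℝ)) * ∑ j ∈ Finset.range n, g j with ha
  set u : ℕ → ℝ := fun n => A + (C - m * A) / n with hu
  set v : ℕ → ℝ := fun n => B + (C - m * B) / n with hv
  have hulim : Tendsto u atTop (nhds A) := by
    have := (tendsto_const_nhds (x := (C - m*A)) (f := atTop (α := ℕ))).div_atTop
      tendsto_natCast_atTop_atTop
    simpa using tendsto_const_nhds.add this
  have hvlim : Tendsto v atTop (nhds B) := by
    have := (tendsto_const_nhds (x := (C - m*B)) (f := atTop (α := ℕ))).div_atTop
      tendsto_natCast_atTop_atTop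
    simpa using tendsto_const_nhds.add this
  have hbound : ∀ᶠ n in atTop, a n ∈ Icc (u n) (v n) := by
    filter_upwards [eventually_ge_atTop (max m 1)] with n hn
    have hm : m ≤ n := le_trans (le_max_left _ _) hn
    have hn1 : (1:ℕ) ≤ n := le_trans (le_max_right _ _) hn
    have hn' : (0:ℝ) < n := by exact_mod_cast hn1
    have hsplit : ∑ j ∈ Finset.range n, g j = C + ∑ j ∈ Finset.Ico m n, g j := by
      rw [hC, ← Finset.sum_range_add_sum_Ico _ hm]
    have hcard : (Finset.Ico m n).card = n - m := Nat.card_Ico m n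
    have hlow : (n - m : ℕ) * A ≤ ∑ j ∈ Finset.Ico m n, g j := by
      calc ((n - m : ℕ) : ℝ) * A = ∑ _j ∈ Finset.Ico m n, A := by
            rw [Finset.sum_const, hcard, nsmul_eq_mul]
        _ ≤ _ := Finset.sum_le_sum fun j hj => (hg j (Finset.mem_Ico.mp hj).1).1
    have hhigh : ∑ j ∈ Finset.Ico m n, g j ≤ (n - m : ℕ) * B := by
      calc ∑ j ∈ Finset.Ico m n, g j ≤ ∑ _j ∈ Finset.Ico m n, B :=
            Finset.sum_le_sum fun j hj => (hg j (Finset.mem_Ico.mp hj).1).2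
        _ = _ := by rw [Finset.sum_const, hcard, nsmul_eq_mul]
    have hnm : ((n - m : ℕ) : ℝ) = (n : ℝ) - m := by
      rw [Nat.cast_sub hm]
    constructor
    · show A + (C - ↑m * A) / ↑n ≤ a n
      have : A + (C - m * A) / n = (1/(n:ℝ)) * (C + ((n:ℝ) - m) * A) := by
        field_simp; ring
      rw [this, ha]
      apply mul_le_mul_of_nonneg_left _ (by positivity)
      rw [hsplit]
      rw [hnm] at hlow; linarith
    · show a n ≤ B + (C - ↑m * B) / ↑n
      have : B + (C - m * B) / n = (1/(n:ℝ)) * (C + ((n:ℝ) - m) * B) := by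
        field_simp; ring
      rw [this, ha]
      apply mul_le_mul_of_nonneg_left _ (by positivity)
      rw [hsplit]
      rw [hnm] at hhigh; linarith
  have hle : a ≤ᶠ[atTop] v := hbound.mono fun n h => h.2
  have hge : ∀ᶠ n in atTop, u n ≤ a n := hbound.mono fun n h => h.1
  have hbdd_above : atTop.IsBoundedUnder (· ≤ ·) a := by
    obtain ⟨M, hM⟩ := hvlim.isBoundedUnder_le
    rw [Filter.eventually_map] at hM
    exact ⟨M, by rw [Filter.eventually_map]
                 filter_upwards [hle, hM] with n h1 h2; exact le_trans h1 h2⟩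
  have hbdd_below : atTop.IsBoundedUnder (· ≥ ·) a := by
    obtain ⟨M, hM⟩ := hulim.isBoundedUnder_ge
    rw [Filter.eventually_map] at hM
    exact ⟨M, by rw [Filter.eventually_map]
                 filter_upwards [hge, hM] with n h1 h2; exact le_trans h2 h1⟩
  constructor
  · calc A = liminf u atTop := hulim.liminf_eq.symm
      _ ≤ liminf a atTop := liminf_le_liminf hge hulim.isBoundedUnder_ge
          hbdd_above.isCoboundedUnder_ge
      _ ≤ limsup a atTop := liminf_le_limsup hbdd_above hbdd_below
  · calc limsup a atTop ≤ limsup v atTop :=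
        limsup_le_limsup hle hbdd_below.isCoboundedUnder_le hvlim.isBoundedUnder_le
      _ = B := hvlim.limsup_eq

section

variable {f₀ f₁ f₂ : ℝ → ℝ} {β₀ lam₀ γ β₂ : ℝ}
variable (h0 : F0cond f₀ β₀ lam₀) (h1 : F1cond f₁ γ lam₀) (h2 : F2cond f₂ β₂ lam₀)

include h0 h1 h2

private lemma maps_icc : ∀ i : Fin 3,
    Set.MapsTo (![f₀,f₁,f₂] i) (Set.Icc 0 1) (Set.Icc 0 1) := by
  intro i
  fin_cases i
  · exact h0.2.1
  · intro x hx
    show f₁ x ∈ Icc (0:ℝ) 1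
    rw [h1.1]
    have hγ : 0 < γ := lt_of_lt_of_le h0.2.2.2.2.2.2.2.2.2.1 h1.2.1
    constructor
    · nlinarith [hx.2]
    · nlinarith [hx.1, h1.2.2]
  · exact h2.2.1

private lemma hasDeriv_fs : ∀ (i : Fin 3) (x : ℝ),
    HasDerivAt (![f₀,f₁,f₂] i) (deriv (![f₀,f₁,f₂] i) x) x := by
  intro i x
  fin_cases i
  · show HasDerivAt f₀ (deriv f₀ x) x
    exact ((h0.1.differentiable one_ne_zero).differentiableAt).hasDerivAt
  · have hf : f₁ = fun y => γ * (1 - y) := funext h1.1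
    have : HasDerivAt (fun y : ℝ => γ * (1 - y)) (γ * (0 - 1)) x :=
      ((hasDerivAt_const x (1:ℝ)).sub (hasDerivAt_id x)).const_mul γ
    show HasDerivAt f₁ (deriv f₁ x) x
    have hd : HasDerivAt f₁ (γ * (0-1)) x := by rw [hf]; exact this
    rw [hd.deriv]; exact hd
  · show HasDerivAt f₂ (deriv f₂ x) x
    exact ((h2.1.differentiable one_ne_zero).differentiableAt).hasDerivAt

private lemma deriv_pos_fs : ∀ (i : Fin 3), ∀ x ∈ Set.Icc (0:ℝ) 1,
    0 < |deriv (![f₀,f₁,f₂] i) x| := by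
  intro i x hx
  have hlam : 0 < lam₀ := h0.2.2.2.2.2.2.2.2.2.1
  fin_cases i
  · show 0 < |deriv f₀ x|
    exact abs_pos.mpr (ne_of_gt (lt_of_lt_of_le hlam (h0.2.2.2.2.2.2.2.2.2.2.2 x hx)))
  · have hf : f₁ = fun y => γ * (1 - y) := funext h1.1
    have hd : HasDerivAt f₁ (-γ) x := by
      have : HasDerivAt (fun y : ℝ => γ * (1 - y)) (γ * (0 - 1)) x :=
        ((hasDerivAt_const x (1:ℝ)).sub (hasDerivAt_id x)).const_mul γ
      rw [hf]; convert this using 1; ring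
    show 0 < |deriv f₁ x|
    rw [hd.deriv]
    have hγ : 0 < γ := lt_of_lt_of_le hlam h1.2.1
    rw [abs_neg, abs_of_pos hγ]; exact hγ
  · show 0 < |deriv f₂ x|
    exact abs_pos.mpr (ne_of_gt (lt_of_lt_of_le hlam (h2.2.2.2.2.2.2.1 x hx)))

private lemma master (p : ℝ) (hp : p ∈ Set.Icc (0:ℝ) 1) (ξ : ℕ → Fin 3) (n : ℕ) :
    seqComp ![f₀,f₁,f₂] ξ n p ∈ Set.Icc (0:ℝ) 1 ∧
    HasDerivAt (seqComp ![f₀,f₁,f₂] ξ n)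
      (∏ j ∈ Finset.range n, deriv (![f₀,f₁,f₂] (ξ j)) (seqComp ![f₀,f₁,f₂] ξ j p)) p := by
  induction n with
  | zero => exact ⟨hp, by simpa [seqComp] using hasDerivAt_id p⟩
  | succ n ih =>
    refine ⟨maps_icc h0 h1 h2 (ξ n) ih.1, ?_⟩
    rw [Finset.prod_range_succ, mul_comm]
    exact (hasDeriv_fs h0 h1 h2 (ξ n) _).comp p ih.2

private lemma deriv_seqComp (p : ℝ) (hp : p ∈ Set.Icc (0:ℝ) 1) (ξ : ℕ → Fin 3) (n : ℕ) :
    Real.log |deriv (seqComp ![f₀,f₁,f₂] ξ n) p| =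
      ∑ j ∈ Finset.range n,
        Real.log |deriv (![f₀,f₁,f₂] (ξ j)) (seqComp ![f₀,f₁,f₂] ξ j p)| := by
  rw [(master h0 h1 h2 p hp ξ n).2.deriv, Finset.abs_prod, Real.log_prod]
  intro j _
  exact ne_of_gt (deriv_pos_fs h0 h1 h2 (ξ j) _ (master h0 h1 h2 p hp ξ j).1)

end

private lemma orbit_zero {fs : Fin 3 → ℝ → ℝ} {ξ : ℕ → Fin 3} {p : ℝ} {m : ℕ}
    (h00 : fs 0 0 = 0) (h20 : fs 2 0 = 0)
    (hm : seqComp fs ξ m p = 0) (hξ : ∀ j, m ≤ j → ξ j = 0 ∨ ξ j = 2) :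
    ∀ n, m ≤ n → seqComp fs ξ n p = 0 := by
  intro n hn
  induction n, hn using Nat.le_induction with
  | base => exact hm
  | succ n hn ih =>
    show fs (ξ n) (seqComp fs ξ n p) = 0
    rcases hξ n hn with h | h <;> rw [ih, h]
    · exact h00
    · exact h20

end Stmt0Aux

open Stmt0Aux in

/-- the set of upper Lyapunov exponents attained on the exceptional set `E`
equals `[log β⁻, log β⁺]`. -/
theorem stmt0 (f₀ f₁ f₂ : ℝ → ℝ) (β₀ lam₀ γ β₂ : ℝ)
    (h0 : F0cond f₀ β₀ lam₀) (h1 : F1cond f₁ γ lam₀) (h2 : F2cond f₂ β₂ lam₀) :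
    {c : ℝ | ∃ p ∈ Set.Icc (0:ℝ) 1, ∃ ξ : ℕ → Fin 3,
        exceptional ![f₀, f₁, f₂] p ξ ∧ lyapUpper ![f₀, f₁, f₂] p ξ = c}
      = Set.Icc (Real.log (min β₀ β₂)) (Real.log (max β₀ β₂)) := by
  classical
  have hlam : 0 < lam₀ := h0.2.2.2.2.2.2.2.2.2.1
  have hβ0 : 1 < β₀ := h0.2.2.2.2.2.2.2.1
  have hβ2 : 1 < β₂ := h2.2.2.2.2.2.1
  have hd00 : deriv f₀ 0 = β₀ := h0.2.2.2.2.2.2.1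
  have hd20 : deriv f₂ 0 = β₂ := h2.2.2.2.2.1
  have hf00 : (![f₀,f₁,f₂] : Fin 3 → ℝ → ℝ) 0 0 = 0 := h0.2.2.2.1
  have hf20 : (![f₀,f₁,f₂] : Fin 3 → ℝ → ℝ) 2 0 = 0 := h2.2.2.2.1
  set A := Real.log (min β₀ β₂) with hA
  set B := Real.log (max β₀ β₂) with hB
  have hminpos : (0:ℝ) < min β₀ β₂ := lt_trans one_pos (lt_min hβ0 hβ2)
  have hAB : A ≤ B := Real.log_le_log hminpos (min_le_max)
  have hmemA0 : Real.log β₀ ∈ Set.Icc A B :=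
    ⟨Real.log_le_log hminpos (min_le_left _ _),
     Real.log_le_log (by linarith) (le_max_left _ _)⟩
  have hmemA2 : Real.log β₂ ∈ Set.Icc A B :=
    ⟨Real.log_le_log hminpos (min_le_right _ _),
     Real.log_le_log (by linarith) (le_max_right _ _)⟩
  apply Set.Subset.antisymm
  · rintro c ⟨p, hp, ξ, ⟨m, hm, hmξ⟩, rfl⟩
    have horb := orbit_zero hf00 hf20 hm hmξ
    have hrw : lyapUpper ![f₀,f₁,f₂] p ξ = limsup (fun n : ℕ => (1/(n:ℝ)) *
        ∑ j ∈ Finset.range n,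
          Real.log |deriv (![f₀,f₁,f₂] (ξ j)) (seqComp ![f₀,f₁,f₂] ξ j p)|) atTop := by
      unfold lyapUpper
      congr 1
      funext n
      rw [deriv_seqComp h0 h1 h2 p hp ξ n]
    rw [hrw]
    apply cesaro_limsup_mem _ m
    intro j hj
    rcases hmξ j hj with h | h <;> rw [horb j hj, h]
    · show Real.log |deriv f₀ 0| ∈ Set.Icc A B
      rw [hd00, abs_of_pos (by linarith)]
      exact hmemA0
    · show Real.log |deriv f₂ 0| ∈ Set.Icc A B
      rw [hd20, abs_of_pos (by linarith)]
      exact hmemA2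
  · intro c hc
    set t : ℝ := (c - A) / (B - A) with htdef
    have ht0 : 0 ≤ t := div_nonneg (by linarith [hc.1]) (by linarith)
    have ht1 : t ≤ 1 := div_le_one_of_le₀ (by linarith [hc.2]) (by linarith)
    obtain ⟨iA, iB, hiA2, hiB2, hvA, hvB⟩ : ∃ iA iB : Fin 3,
        (iA = 0 ∨ iA = 2) ∧ (iB = 0 ∨ iB = 2) ∧
        Real.log |deriv (![f₀,f₁,f₂] iA) 0| = A ∧
        Real.log |deriv (![f₀,f₁,f₂] iB) 0| = B := by
      rcases le_total β₀ β₂ with h | h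
      · refine ⟨0, 2, Or.inl rfl, Or.inr rfl, ?_, ?_⟩
        · show Real.log |deriv f₀ 0| = A
          rw [hd00, abs_of_pos (by linarith), hA, min_eq_left h]
        · show Real.log |deriv f₂ 0| = B
          rw [hd20, abs_of_pos (by linarith), hB, max_eq_right h]
      · refine ⟨2, 0, Or.inr rfl, Or.inl rfl, ?_, ?_⟩
        · show Real.log |deriv f₂ 0| = A
          rw [hd20, abs_of_pos (by linarith), hA, min_eq_right h]
        · show Real.log |deriv f₀ 0| = B
          rw [hd00, abs_of_pos (by linarith), hB, max_eq_left h]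
    set ξ : ℕ → Fin 3 := fun j => if ⌊((j:ℝ)+1)*t⌋ = ⌊(j:ℝ)*t⌋ then iA else iB with hξ
    have hξ02 : ∀ j, ξ j = 0 ∨ ξ j = 2 := by
      intro j
      rw [hξ]
      dsimp only
      split
      · exact hiA2
      · exact hiB2
    have hm0 : seqComp ![f₀,f₁,f₂] ξ 0 (0:ℝ) = 0 := rfl
    have horb : ∀ n, seqComp ![f₀,f₁,f₂] ξ n (0:ℝ) = 0 := fun n =>
      orbit_zero hf00 hf20 hm0 (fun j _ => hξ02 j) n (Nat.zero_le n)
    refine ⟨0, by constructor <;> norm_num, ξ, ⟨0, hm0, fun j _ => hξ02 j⟩, ?_⟩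
    have hfl : ∀ j : ℕ, ⌊(j:ℝ)*t⌋ ≤ ⌊((j:ℝ)+1)*t⌋ ∧ ⌊((j:ℝ)+1)*t⌋ ≤ ⌊(j:ℝ)*t⌋ + 1 := by
      intro j
      constructor
      · exact Int.floor_le_floor (by nlinarith)
      · calc ⌊((j:ℝ)+1)*t⌋ ≤ ⌊(j:ℝ)*t + 1⌋ := Int.floor_le_floor (by nlinarith)
          _ = ⌊(j:ℝ)*t⌋ + 1 := Int.floor_add_one _
    have hgval : ∀ j : ℕ,
        Real.log |deriv (![f₀,f₁,f₂] (ξ j)) (seqComp ![f₀,f₁,f₂] ξ j 0)| =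
          A + (B - A) * ((⌊((j:ℝ)+1)*t⌋ : ℝ) - (⌊(j:ℝ)*t⌋ : ℝ)) := by
      intro j
      rw [horb j, hξ]
      dsimp only
      split
      · next h => rw [h, hvA]; ring
      · next h =>
        have h1 : ⌊((j:ℝ)+1)*t⌋ = ⌊(j:ℝ)*t⌋ + 1 := by
          have := (hfl j).1
          have := (hfl j).2
          omega
        rw [hvB, h1]
        push_cast
        ring
    have hsum : ∀ n : ℕ,
        ∑ j ∈ Finset.range n,
          Real.log |deriv (![f₀,f₁,f₂] (ξ j)) (seqComp ![f₀,f₁,f₂] ξ j 0)| =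
        n * A + (B - A) * (⌊(n:ℝ)*t⌋ : ℝ) := by
      intro n
      have htel : ∑ j ∈ Finset.range n,
          ((⌊(((j:ℕ)+1:ℕ):ℝ)*t⌋ : ℝ) - (⌊((j:ℕ):ℝ)*t⌋ : ℝ)) =
          (⌊(n:ℝ)*t⌋ : ℝ) - (⌊((0:ℕ):ℝ)*t⌋ : ℝ) :=
        Finset.sum_range_sub (fun j : ℕ => ((⌊((j:ℕ):ℝ)*t⌋ : ℝ))) n
      calc ∑ j ∈ Finset.range n,
            Real.log |deriv (![f₀,f₁,f₂] (ξ j)) (seqComp ![f₀,f₁,f₂] ξ j 0)|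
          = ∑ j ∈ Finset.range n,
            (A + (B - A) * ((⌊((j:ℝ)+1)*t⌋ : ℝ) - (⌊(j:ℝ)*t⌋ : ℝ))) :=
            Finset.sum_congr rfl fun j _ => hgval j
        _ = n * A + (B - A) * ∑ j ∈ Finset.range n,
              ((⌊((j:ℝ)+1)*t⌋ : ℝ) - (⌊(j:ℝ)*t⌋ : ℝ)) := by
            rw [Finset.sum_add_distrib, Finset.sum_const, ← Finset.mul_sum]
            simp [nsmul_eq_mul]
        _ = n * A + (B - A) * (⌊(n:ℝ)*t⌋ : ℝ) := by
            rw [show ∑ j ∈ Finset.range n,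
                ((⌊((j:ℝ)+1)*t⌋ : ℝ) - (⌊(j:ℝ)*t⌋ : ℝ)) =
                ∑ j ∈ Finset.range n,
                ((⌊(((j:ℕ)+1:ℕ):ℝ)*t⌋ : ℝ) - (⌊((j:ℕ):ℝ)*t⌋ : ℝ)) from
              Finset.sum_congr rfl fun j _ => by push_cast; ring_nf]
            rw [htel]
            norm_num
    have hAc : A + (B - A) * t = c := by
      rcases eq_or_lt_of_le hAB with h | h
      · have : c = A := le_antisymm (h ▸ hc.2) hc.1
        rw [this, ← h]; ring
      · rw [htdef, mul_div_cancel₀ _ (by linarith : B - A ≠ 0)]; ring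
    have hlim : Tendsto (fun n : ℕ => (1/(n:ℝ)) *
        ∑ j ∈ Finset.range n,
          Real.log |deriv (![f₀,f₁,f₂] (ξ j)) (seqComp ![f₀,f₁,f₂] ξ j 0)|)
        atTop (nhds c) := by
      have key : Tendsto (fun n : ℕ => A + (B - A) * ((⌊(n:ℝ)*t⌋ : ℝ)/n))
          atTop (nhds (A + (B - A) * t)) :=
        tendsto_const_nhds.add ((floor_ratio_tendsto t).const_mul _)
      rw [hAc] at key
      refine key.congr' ?_
      filter_upwards [eventually_ge_atTop 1] with n hn
      have hn' : (0:ℝ) < n := by exact_mod_cast hn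
      rw [hsum n]
      field_simp
    have hrw : lyapUpper ![f₀,f₁,f₂] 0 ξ = limsup (fun n : ℕ => (1/(n:ℝ)) *
        ∑ j ∈ Finset.range n,
          Real.log |deriv (![f₀,f₁,f₂] (ξ j)) (seqComp ![f₀,f₁,f₂] ξ j 0)|) atTop := by
      unfold lyapUpper
      congr 1
      funext n
      rw [deriv_seqComp h0 h1 h2 0 (by constructor <;> norm_num) ξ n]
    rw [hrw]
    exact hlim.limsup_eq

end
end

section
/- Assume (F0) and (F1). Let δ∈(0,γ) and set δ' := 1−γ⁻¹·δ. Then for every N∈ℕ and every q∈ℝ with δ' ≤ q < f₀(δ'), one has f₁(f₀^N(q)) ≥ λ₀^{N+1}·δ. -/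
open Set Filter MeasureTheory

noncomputable section

/-- for `δ' = 1 - γ⁻¹δ ≤ q < f₀(δ')`, one has `f₁(f₀^N(q)) ≥ λ₀^{N+1}·δ`. -/
theorem stmt1 (f₀ f₁ : ℝ → ℝ) (β₀ lam₀ γ δ : ℝ)
    (h0 : F0cond f₀ β₀ lam₀) (h1 : F1cond f₁ γ lam₀)
    (hδ0 : 0 < δ) (hδγ : δ < γ)
    (N : ℕ) (q : ℝ) (hq1 : 1 - γ⁻¹ * δ ≤ q) (hq2 : q < f₀ (1 - γ⁻¹ * δ)) :
    lam₀ ^ (N + 1) * δ ≤ f₁ (f₀^[N] q) := by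
  obtain ⟨hC1, hmaps, hmono, h00, h11, hgt, hd0, hβ, hd1, hlam0, hlam1, hlamle⟩ := h0
  obtain ⟨hf1, hlamγ, hγ1⟩ := h1
  have hγ0 : (0:ℝ) < γ := lt_of_lt_of_le hlam0 hlamγ
  have hdiff : Differentiable ℝ f₀ := hC1.differentiable one_ne_zero
  -- key lemma: 1 - f₀ x ≥ lam₀ * (1 - x) on [0,1]
  have key : ∀ x ∈ Set.Icc (0:ℝ) 1, lam₀ * (1 - x) ≤ 1 - f₀ x := by
    intro x hx
    have hmonog : MonotoneOn (fun x => f₀ x - lam₀ * x) (Set.Icc 0 1) := by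
      apply monotoneOn_of_deriv_nonneg (convex_Icc 0 1)
      · exact (hdiff.continuous.sub (continuous_const.mul continuous_id)).continuousOn
      · exact (hdiff.sub ((differentiable_const _).mul differentiable_id)).differentiableOn
      · intro y hy
        rw [interior_Icc] at hy
        have : deriv (fun x => f₀ x - lam₀ * x) y = deriv f₀ y - lam₀ := by
          have h := ((hdiff y).hasDerivAt.sub ((hasDerivAt_id y).const_mul lam₀)).deriv
          simp at h; exact h
        rw [this, sub_nonneg]
        exact hlamle y ⟨hy.1.le, hy.2.le⟩
    have := hmonog hx (by constructor <;> norm_num) hx.2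
    simp only [h11] at this
    linarith
  have hδ' : (0:ℝ) < 1 - γ⁻¹ * δ := by
    have : γ⁻¹ * δ < 1 := by
      rw [inv_mul_lt_iff₀ hγ0]; linarith
    linarith
  have hδ'le : 1 - γ⁻¹ * δ ≤ 1 := by
    have : 0 ≤ γ⁻¹ * δ := by positivity
    linarith
  have hqmem : q ∈ Set.Icc (0:ℝ) 1 := by
    constructor
    · linarith
    · exact le_of_lt (lt_of_lt_of_le hq2 (hmaps ⟨hδ'.le, hδ'le⟩).2)
  -- iterate estimate
  have iter : ∀ n : ℕ, f₀^[n] q ∈ Set.Icc (0:ℝ) 1 ∧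
      lam₀ ^ n * (1 - q) ≤ 1 - f₀^[n] q := by
    intro n
    induction n with
    | zero => simpa using hqmem
    | succ n ih =>
      obtain ⟨hmem, hest⟩ := ih
      rw [Function.iterate_succ_apply']
      refine ⟨hmaps hmem, ?_⟩
      have h1 := key _ hmem
      calc lam₀ ^ (n+1) * (1 - q) = lam₀ * (lam₀ ^ n * (1 - q)) := by ring
        _ ≤ lam₀ * (1 - f₀^[n] q) := by
            exact mul_le_mul_of_nonneg_left hest hlam0.le
        _ ≤ 1 - f₀ (f₀^[n] q) := h1
  obtain ⟨hmem, hest⟩ := iter N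
  rw [hf1]
  -- 1 - q ≥ 1 - f₀ δ' ≥ lam₀ * (1 - δ') = lam₀ * γ⁻¹ * δ
  have h2 : lam₀ * (γ⁻¹ * δ) ≤ 1 - q := by
    have := key _ ⟨hδ'.le, hδ'le⟩
    have h3 : 1 - f₀ (1 - γ⁻¹ * δ) ≤ 1 - q := by linarith
    calc lam₀ * (γ⁻¹ * δ) = lam₀ * (1 - (1 - γ⁻¹ * δ)) := by ring
      _ ≤ 1 - f₀ (1 - γ⁻¹ * δ) := this
      _ ≤ 1 - q := h3
  have hpow : (0:ℝ) ≤ lam₀ ^ N := by positivity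
  calc lam₀ ^ (N + 1) * δ = γ * (lam₀ ^ N * (lam₀ * (γ⁻¹ * δ))) := by
        field_simp; ring
    _ ≤ γ * (lam₀ ^ N * (1 - q)) := by
        apply mul_le_mul_of_nonneg_left _ hγ0.le
        exact mul_le_mul_of_nonneg_left h2 hpow
    _ ≤ γ * (1 - f₀^[N] q) := mul_le_mul_of_nonneg_left hest hγ0.le

end
end

section
/- Assume (F0), (F1), (F2) and (F012), and set δ' := 1−γ⁻¹·δ. Let N,M∈ℕ, let τ₀,…,τ_M ∈ {0,2}, and let q∈ℝ with δ' ≤ q < f₀(δ'). Assume that f₀^j(q) ∈ H' for all j=0,…,N, that y₀ := f₁(f₀^N(q)) ∈ H, and that the points y_j := f_{τ_{j−1}}(y_{j−1}) lie in H for all j=1,…,M. Then, for the word w := (0,…,0,1,τ₀,…,τ_M) consisting of N zeros followed by the symbol 1 followed by τ₀,…,τ_M (so that w has length N+M+2), one has (1/(N+M+2))·log|(f_[w])'(q)| < log β'. -/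
open Set Filter MeasureTheory

noncomputable section

namespace Stmt3Aux

lemma wordComp_append (fs : Fin 3 → ℝ → ℝ) (l1 l2 : List (Fin 3)) (x : ℝ) :
    wordComp fs (l1 ++ l2) x = wordComp fs l2 (wordComp fs l1 x) := by
  simp [wordComp, List.foldl_append]

lemma wordComp_differentiable (fs : Fin 3 → ℝ → ℝ) (h : ∀ i, Differentiable ℝ (fs i)) :
    ∀ l : List (Fin 3), Differentiable ℝ (wordComp fs l) := by
  intro l
  induction l with
  | nil =>
    have he : wordComp fs [] = fun x : ℝ => x := rfl
    rw [he]
    exact differentiable_id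
  | cons i l ih =>
    have he : wordComp fs (i :: l) = fun x => wordComp fs l (fs i x) := rfl
    rw [he]
    exact ih.comp (h i)

lemma deriv_wordComp_append (fs : Fin 3 → ℝ → ℝ) (h : ∀ i, Differentiable ℝ (fs i))
    (l1 l2 : List (Fin 3)) (x : ℝ) :
    deriv (wordComp fs (l1 ++ l2)) x
      = deriv (wordComp fs l2) (wordComp fs l1 x) * deriv (wordComp fs l1) x := by
  have he : wordComp fs (l1 ++ l2) = fun y => wordComp fs l2 (wordComp fs l1 y) :=
    funext fun y => wordComp_append fs l1 l2 y
  rw [he]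
  exact deriv_comp x (wordComp_differentiable fs h l2).differentiableAt
    (wordComp_differentiable fs h l1).differentiableAt

lemma mvt_lower (f : ℝ → ℝ) (hf : Differentiable ℝ f) (lam a b : ℝ) (hab : a ≤ b)
    (hd : ∀ x ∈ Set.Ioo a b, lam ≤ deriv f x) : lam * (b - a) ≤ f b - f a := by
  rcases eq_or_lt_of_le hab with rfl | hab
  · simp
  · obtain ⟨c, hc, hc2⟩ := exists_deriv_eq_slope f hab hf.continuous.continuousOn
      (fun x _ => hf.differentiableAt.differentiableWithinAt)
    have h1 := hd c hc
    rw [hc2] at h1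
    have hba : 0 < b - a := by linarith
    calc lam * (b - a) ≤ (f b - f a) / (b - a) * (b - a) :=
          mul_le_mul_of_nonneg_right h1 hba.le
      _ = f b - f a := by field_simp

lemma ofFn_succ_concat (n : ℕ) (τ : ℕ → Fin 3) :
    List.ofFn (fun j : Fin (n + 1) => τ j) = (List.ofFn fun j : Fin n => τ j) ++ [τ n] := by
  rw [List.ofFn_succ']
  simp

lemma arith_key (nn mm LL lb lp lh ll ll' lg : ℝ)
    (hNnn : 0 ≤ nn) (hMnn : 0 ≤ mm) (hL1' : 1 ≤ LL)
    (hlbpos : 0 < lb) (hlppos : 0 < lp) (hlhpos : 0 < lh)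
    (hllneg : ll < 0) (hll'neg : ll' < 0) (hlgneg : lg < 0) (hlplb : lp < lb)
    (hlogkey : mm * lh ≤ (nn + 1) * (-ll))
    (hstar : -ll * lb / lh - -ll' + 2 / 3 * lb < 3 / 4 * lp)
    (hL2 : 4 * -ll * lb / (lh * lp) < LL)
    (hL3' : LL * lb + lg < (LL + 1) * lp)
    (hcases : mm + 1 ≤ LL ∨ LL ≤ mm) :
    nn * ll' + lg + (mm + 1) * lb < (nn + mm + 2) * lp := by
  have hNll' : nn * ll' ≤ 0 := mul_nonpos_of_nonneg_of_nonpos hNnn hll'neg.le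
  rcases hcases with hcase | hLM
  · have h1 : 0 ≤ (LL - (mm + 1)) * (lb - lp) := mul_nonneg (by linarith) (by linarith)
    linarith [h1, mul_nonneg hNnn hlppos.le, mul_nonneg hMnn hlppos.le]
  · set c := (-ll) / lh with hc_def
    have hcpos : 0 < c := div_pos (by linarith) hlhpos
    have hMc : mm ≤ (nn + 1) * c := by
      rw [hc_def, mul_div_assoc', le_div_iff₀ hlhpos]
      linarith
    have hstar' : c * lb + ll' + (2 / 3) * lb < (3 / 4) * lp := by
      have hcb : c * lb = -ll * lb / lh := by rw [hc_def]; ring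
      rw [hcb]
      linarith
    have hL2' : 4 * (c * lb) < mm * lp := by
      have h1 : 4 * -ll * lb / (lh * lp) < LL := hL2
      have h2 : 4 * -ll * lb / lh < LL * lp := by
        rw [div_lt_iff₀ (by positivity : (0:ℝ) < lh * lp)] at h1
        rw [div_lt_iff₀ hlhpos]
        linarith [h1]
      have h3 : 4 * (c * lb) = 4 * -ll * lb / lh := by rw [hc_def]; ring
      rw [h3]
      linarith [h2, mul_le_mul_of_nonneg_right hLM hlppos.le]
    have hT : nn * ll' + lg + (mm + 1) * lb ≤ nn * (ll' + c * lb) + (c + 1) * lb + lg := by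
      linarith [mul_le_mul_of_nonneg_right hMc hlbpos.le]
    have hT2 : nn * (ll' + c * lb) ≤ nn * ((3 / 4) * lp - (2 / 3) * lb) :=
      mul_le_mul_of_nonneg_left (by linarith) hNnn
    have hnnlb : 0 ≤ nn * lb := mul_nonneg hNnn hlbpos.le
    have hnnlp : 0 ≤ nn * lp := mul_nonneg hNnn hlppos.le
    have hmmlp : 0 ≤ mm * lp := mul_nonneg hMnn hlppos.le
    rcases le_or_gt (1/3 : ℝ) c with hc3 | hc3
    · have h5 : 0 ≤ (3 * c - 1) * lb := mul_nonneg (by linarith) hlbpos.le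
      linarith [hT, hT2, h5, hL2']
    · have hM1 : (1:ℝ) ≤ mm := le_trans hL1' hLM
      have h6 : 0 < (nn + 1) * (1/3 - c) := mul_pos (by linarith) (by linarith)
      have hN2 : (2:ℝ) < nn := by linarith [h6, hMc, hM1]
      have h5 : 0 < ((2/3) * nn - (c + 1)) * lb := mul_pos (by linarith) hlbpos
      linarith [hT, hT2, h5]

end Stmt3Aux

/-- finite-time exponent estimate along a word `0^N 1 τ₀ … τ_M`. -/
theorem stmt3 (f₀ f₁ f₂ : ℝ → ℝ) (β₀ lam₀ γ β₂ δ βpr βH lampr : ℝ) (L : ℕ)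
    (h0 : F0cond f₀ β₀ lam₀) (h1 : F1cond f₁ γ lam₀) (h2 : F2cond f₂ β₂ lam₀)
    (h012 : F012cond f₀ f₁ f₂ γ lam₀ β₀ β₂ δ βpr βH lampr L)
    (N M : ℕ) (τ : ℕ → Fin 3) (hτ : ∀ j ≤ M, τ j = 0 ∨ τ j = 2)
    (q : ℝ) (hq1 : 1 - γ⁻¹ * δ ≤ q) (hq2 : q < f₀ (1 - γ⁻¹ * δ))
    (hH' : ∀ j ≤ N, f₀^[j] q ∈ Set.Icc (1 - γ⁻¹ * δ) 1)
    (y : ℕ → ℝ) (hy0 : y 0 = f₁ (f₀^[N] q))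
    (hyrec : ∀ j, 1 ≤ j → j ≤ M → y j = ![f₀, f₁, f₂] (τ (j - 1)) (y (j - 1)))
    (hyH : ∀ j ≤ M, y j ∈ Set.Icc (0:ℝ) δ) :
    (1 / ((N : ℝ) + (M : ℝ) + 2)) *
        Real.log |deriv (wordComp ![f₀, f₁, f₂]
          (List.replicate N 0 ++ [1] ++ List.ofFn (fun j : Fin (M + 1) => τ j))) q|
      < Real.log βpr := by
  obtain ⟨hf₀C, hf₀map, hf₀mono, hf₀0, hf₀1, hf₀gt, hf₀d0, hβ₀, hf₀d1, hlam₀pos, hlam₀lt,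
    hf₀dlow⟩ := h0
  obtain ⟨hf₁eq, hγlam, hγ1⟩ := h1
  obtain ⟨hf₂C, hf₂map, hf₂mono, hf₂0, hf₂d0, hβ₂, hf₂dlow, -⟩ := h2
  obtain ⟨hderup, hδpos, hδγ, -, -, -, -, hβprG, hβpr1, hβprlt, hβHL, hβH1, hβHlt, hlamprG,
    hlampr1, hstar, hL1, hL2, hL3⟩ := h012
  set fs : Fin 3 → ℝ → ℝ := ![f₀, f₁, f₂] with hfs
  -- basic constants
  have hγpos : 0 < γ := lt_of_lt_of_le hlam₀pos hγlam
  have hγinvδ : γ⁻¹ * δ < 1 := by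
    have := mul_lt_mul_of_pos_left hδγ (inv_pos.2 hγpos)
    rwa [inv_mul_cancel₀ hγpos.ne'] at this
  have hγinvδpos : 0 < γ⁻¹ * δ := mul_pos (inv_pos.2 hγpos) hδpos
  have hH'sub : Set.Icc (1 - γ⁻¹ * δ) 1 ⊆ Set.Icc (0:ℝ) 1 := by
    intro x hx
    exact ⟨le_trans (by linarith) hx.1, hx.2⟩
  have hδ1 : δ ≤ 1 := le_of_lt (lt_trans hδγ hγ1)
  have hHsub : Set.Icc (0:ℝ) δ ⊆ Set.Icc (0:ℝ) 1 := Set.Icc_subset_Icc le_rfl hδ1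
  have hβplus : 1 < max β₀ β₂ := lt_max_of_lt_left hβ₀
  have hβppos : (0:ℝ) < max β₀ β₂ := lt_trans one_pos hβplus
  -- differentiability
  have hf₀diff : Differentiable ℝ f₀ := hf₀C.differentiable one_ne_zero
  have hf₂diff : Differentiable ℝ f₂ := hf₂C.differentiable one_ne_zero
  have hf₁eq' : f₁ = fun x => γ * (1 - x) := funext hf₁eq
  have hf₁diff : Differentiable ℝ f₁ := by
    rw [hf₁eq']; exact (differentiable_const _).mul ((differentiable_const _).sub differentiable_id)
  have hf₁d : ∀ x, deriv f₁ x = -γ := by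
    intro x
    have h : HasDerivAt (fun x : ℝ => γ * (1 - x)) (γ * (0 - 1)) x :=
      ((hasDerivAt_const x (1 : ℝ)).sub (hasDerivAt_id x)).const_mul γ
    rw [hf₁eq']
    simpa using h.deriv
  have hfsdiff : ∀ i, Differentiable ℝ (fs i) := by
    intro i
    fin_cases i
    · exact hf₀diff
    · exact hf₁diff
    · exact hf₂diff
  -- lampr facts
  have hlampr_ub : ∀ x ∈ Set.Icc (1 - γ⁻¹ * δ) 1, deriv f₀ x ≤ lampr := by
    intro x hx
    exact hlamprG.2 ⟨x, hx, rfl⟩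
  have hlampr_pos : 0 < lampr := by
    obtain ⟨x, hx, hxe⟩ := hlamprG.1
    rw [hxe]
    exact lt_of_lt_of_le hlam₀pos (hf₀dlow x (hH'sub hx))
  -- βH lower bound facts
  have hβH_lb : ∀ x ∈ Set.Icc (0:ℝ) δ, βH ≤ deriv f₀ x ∧ βH ≤ deriv f₂ x := by
    intro x hx
    have := hβHL.2 ⟨x, hx, rfl⟩
    exact ⟨le_trans this (min_le_left _ _), le_trans this (min_le_right _ _)⟩
  -- derivative bounds for symbols 0, 2 on [0,1]
  have hbound02 : ∀ i : Fin 3, (i = 0 ∨ i = 2) → ∀ x ∈ Set.Icc (0:ℝ) 1,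
      lam₀ ≤ deriv (fs i) x ∧ deriv (fs i) x ≤ max β₀ β₂ := by
    rintro i (rfl | rfl) x hx
    · exact ⟨hf₀dlow x hx, (hderup x hx).1⟩
    · exact ⟨hf₂dlow x hx, (hderup x hx).2⟩
  -- head chunk: wordComp of replicate N 0 is the iterate, and derivative bounds
  have hwc0 : wordComp fs [(0 : Fin 3)] = f₀ := rfl
  have hwc1 : wordComp fs [(1 : Fin 3)] = f₁ := rfl
  have headVal : ∀ n : ℕ, wordComp fs (List.replicate n 0) q = f₀^[n] q := by
    intro n
    induction n with
    | zero => rfl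
    | succ n ih =>
      rw [List.replicate_succ', Stmt3Aux.wordComp_append, ih, Function.iterate_succ_apply']
      rfl
  have headD : ∀ n ≤ N, 0 < deriv (wordComp fs (List.replicate n 0)) q ∧
      deriv (wordComp fs (List.replicate n 0)) q ≤ lampr ^ n := by
    intro n hn
    induction n with
    | zero =>
      have he : wordComp fs (List.replicate 0 (0 : Fin 3)) = fun x : ℝ => x := rfl
      rw [he]
      simp
    | succ n ih =>
      have hn' : n ≤ N := le_trans (Nat.le_succ n) hn
      obtain ⟨ih1, ih2⟩ := ih hn'
      have hmem : f₀^[n] q ∈ Set.Icc (1 - γ⁻¹ * δ) 1 := hH' n hn'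
      rw [List.replicate_succ', Stmt3Aux.deriv_wordComp_append fs hfsdiff, headVal, hwc0]
      have hlow : lam₀ ≤ deriv f₀ (f₀^[n] q) := hf₀dlow _ (hH'sub hmem)
      have hup : deriv f₀ (f₀^[n] q) ≤ lampr := hlampr_ub _ hmem
      constructor
      · exact mul_pos (lt_of_lt_of_le hlam₀pos hlow) ih1
      · calc deriv f₀ (f₀^[n] q) * deriv (wordComp fs (List.replicate n 0)) q
            ≤ lampr * lampr ^ n := by
              apply mul_le_mul hup ih2 ih1.le hlampr_pos.le
          _ = lampr ^ (n + 1) := (pow_succ' lampr n).symm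
  -- tail chunk
  have tailVal : ∀ k ≤ M, wordComp fs (List.ofFn (fun j : Fin k => τ j)) (y 0) = y k := by
    intro k hk
    induction k with
    | zero => rfl
    | succ k ih =>
      have hk' : k ≤ M := le_trans (Nat.le_succ k) hk
      rw [Stmt3Aux.ofFn_succ_concat, Stmt3Aux.wordComp_append, ih hk']
      have := hyrec (k + 1) (Nat.succ_le_succ (Nat.zero_le k)) hk
      simp only [Nat.add_sub_cancel] at this
      rw [this]
      rfl
  have tailD : ∀ k ≤ M + 1, 0 < deriv (wordComp fs (List.ofFn (fun j : Fin k => τ j))) (y 0) ∧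
      deriv (wordComp fs (List.ofFn (fun j : Fin k => τ j))) (y 0) ≤ (max β₀ β₂) ^ k := by
    intro k hk
    induction k with
    | zero =>
      have he : wordComp fs (List.ofFn (fun j : Fin 0 => τ j)) = fun x : ℝ => x := rfl
      rw [he]
      simp
    | succ k ih =>
      have hk' : k ≤ M := Nat.lt_succ_iff.mp hk
      obtain ⟨ih1, ih2⟩ := ih (le_trans (Nat.le_succ k) hk)
      have hyk : y k ∈ Set.Icc (0:ℝ) δ := hyH k hk'
      rw [Stmt3Aux.ofFn_succ_concat, Stmt3Aux.deriv_wordComp_append fs hfsdiff, tailVal k hk']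
      have hwcτ : wordComp fs [τ k] = fs (τ k) := rfl
      rw [hwcτ]
      obtain ⟨hlow, hup⟩ := hbound02 (τ k) (hτ k hk') (y k) (hHsub hyk)
      constructor
      · exact mul_pos (lt_of_lt_of_le hlam₀pos hlow) ih1
      · calc deriv (fs (τ k)) (y k) * deriv (wordComp fs (List.ofFn fun j : Fin k => τ j)) (y 0)
            ≤ max β₀ β₂ * (max β₀ β₂) ^ k := by
              apply mul_le_mul hup ih2 ih1.le hβppos.le
          _ = (max β₀ β₂) ^ (k + 1) := (pow_succ' _ k).symm
  -- assemble the derivative of the full word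
  have hsplit1 : deriv (wordComp fs (List.replicate N 0 ++ [1] ++
      List.ofFn (fun j : Fin (M + 1) => τ j))) q
      = deriv (wordComp fs (List.ofFn (fun j : Fin (M + 1) => τ j))) (y 0) *
        (-γ * deriv (wordComp fs (List.replicate N 0)) q) := by
    rw [Stmt3Aux.deriv_wordComp_append fs hfsdiff (List.replicate N 0 ++ [1]),
      Stmt3Aux.deriv_wordComp_append fs hfsdiff (List.replicate N 0) [1],
      Stmt3Aux.wordComp_append fs (List.replicate N 0) [1], headVal, hwc1, hf₁d]
    rw [← hy0]
  obtain ⟨hD1, hD2⟩ := headD N le_rfl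
  obtain ⟨hT1, hT2⟩ := tailD (M + 1) le_rfl
  set Dh := deriv (wordComp fs (List.replicate N 0)) q with hDh
  set Dt := deriv (wordComp fs (List.ofFn (fun j : Fin (M + 1) => τ j))) (y 0) with hDt
  have habs : |deriv (wordComp fs (List.replicate N 0 ++ [1] ++
      List.ofFn (fun j : Fin (M + 1) => τ j))) q| = Dt * γ * Dh := by
    rw [hsplit1]
    have hpos : 0 < Dt * (γ * Dh) := mul_pos hT1 (mul_pos hγpos hD1)
    rw [abs_of_neg (by nlinarith [hpos] : Dt * (-γ * Dh) < 0)]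
    ring
  -- log abbreviations
  set lb := Real.log (max β₀ β₂) with hlb_def
  set lp := Real.log βpr with hlp_def
  set lh := Real.log βH with hlh_def
  set ll := Real.log lam₀ with hll_def
  set ll' := Real.log lampr with hll'_def
  set lg := Real.log γ with hlg_def
  have hlbpos : 0 < lb := Real.log_pos hβplus
  have hlppos : 0 < lp := Real.log_pos hβpr1
  have hlhpos : 0 < lh := Real.log_pos hβH1
  have hllneg : ll < 0 := Real.log_neg hlam₀pos hlam₀lt
  have hll'neg : ll' < 0 := Real.log_neg hlampr_pos hlampr1
  have hlgneg : lg < 0 := Real.log_neg hγpos hγ1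
  have hlplb : lp < lb := by
    apply Real.log_lt_log (lt_trans one_pos hβpr1)
    exact lt_of_lt_of_le hβprlt (le_trans (min_le_left _ _) (le_max_left _ _))
  -- bound on the log of the derivative
  have hlogD : Real.log (Dt * γ * Dh) ≤ (N:ℝ) * ll' + lg + ((M:ℝ) + 1) * lb := by
    rw [Real.log_mul (by positivity) hD1.ne', Real.log_mul hT1.ne' hγpos.ne']
    have h1 : Real.log Dt ≤ ((M:ℝ) + 1) * lb := by
      calc Real.log Dt ≤ Real.log ((max β₀ β₂) ^ (M + 1)) := Real.log_le_log hT1 hT2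
        _ = ((M:ℝ) + 1) * lb := by rw [Real.log_pow]; push_cast; ring
    have h2 : Real.log Dh ≤ (N:ℝ) * ll' := by
      calc Real.log Dh ≤ Real.log (lampr ^ N) := Real.log_le_log hD1 hD2
        _ = (N:ℝ) * ll' := by rw [Real.log_pow]
    linarith
  -- the combinatorial relation between N and M
  have hstep : ∀ x ∈ Set.Icc (0:ℝ) 1, lam₀ * (1 - x) ≤ 1 - f₀ x := by
    intro x hx
    have := Stmt3Aux.mvt_lower f₀ hf₀diff lam₀ x 1 hx.2
      (fun c hc => hf₀dlow c ⟨le_trans hx.1 hc.1.le, hc.2.le⟩)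
    rw [hf₀1] at this
    linarith
  have hiter_low : ∀ j ≤ N, lam₀ ^ j * (1 - q) ≤ 1 - f₀^[j] q := by
    intro j hj
    induction j with
    | zero => simp
    | succ j ih =>
      have hj' : j ≤ N := le_trans (Nat.le_succ j) hj
      have hmem : f₀^[j] q ∈ Set.Icc (0:ℝ) 1 := hH'sub (hH' j hj')
      have h1 := hstep _ hmem
      have h2 := ih hj'
      rw [Function.iterate_succ_apply']
      calc lam₀ ^ (j + 1) * (1 - q) = lam₀ * (lam₀ ^ j * (1 - q)) := by ring
        _ ≤ lam₀ * (1 - f₀^[j] q) := by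
            exact mul_le_mul_of_nonneg_left h2 hlam₀pos.le
        _ ≤ 1 - f₀ (f₀^[j] q) := h1
  have h1q : lam₀ * (γ⁻¹ * δ) ≤ 1 - q := by
    have hmem : (1 - γ⁻¹ * δ) ∈ Set.Icc (0:ℝ) 1 := ⟨by linarith, by linarith⟩
    have := hstep _ hmem
    have h2 : (1:ℝ) - (1 - γ⁻¹ * δ) = γ⁻¹ * δ := by ring
    rw [h2] at this
    linarith
  have hNlow : lam₀ ^ (N + 1) * (γ⁻¹ * δ) ≤ 1 - f₀^[N] q := by
    have h2 := hiter_low N le_rfl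
    calc lam₀ ^ (N + 1) * (γ⁻¹ * δ) = lam₀ ^ N * (lam₀ * (γ⁻¹ * δ)) := by ring
      _ ≤ lam₀ ^ N * (1 - q) := mul_le_mul_of_nonneg_left h1q (pow_nonneg hlam₀pos.le N)
      _ ≤ 1 - f₀^[N] q := h2
  have hy0eq : y 0 = γ * (1 - f₀^[N] q) := by rw [hy0, hf₁eq]
  have hy0low : lam₀ ^ (N + 1) * δ ≤ y 0 := by
    rw [hy0eq]
    have := mul_le_mul_of_nonneg_left hNlow hγpos.le
    calc lam₀ ^ (N + 1) * δ = γ * (lam₀ ^ (N + 1) * (γ⁻¹ * δ)) := by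
          field_simp
      _ ≤ γ * (1 - f₀^[N] q) := this
  have hstep2 : ∀ i : Fin 3, (i = 0 ∨ i = 2) → ∀ x ∈ Set.Icc (0:ℝ) δ, βH * x ≤ fs i x := by
    rintro i (rfl | rfl) x hx
    · have := Stmt3Aux.mvt_lower f₀ hf₀diff βH 0 x hx.1
        (fun c hc => (hβH_lb c ⟨hc.1.le, le_trans hc.2.le hx.2⟩).1)
      show βH * x ≤ f₀ x
      rw [hf₀0] at this; simpa using this
    · have := Stmt3Aux.mvt_lower f₂ hf₂diff βH 0 x hx.1
        (fun c hc => (hβH_lb c ⟨hc.1.le, le_trans hc.2.le hx.2⟩).2)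
      show βH * x ≤ f₂ x
      rw [hf₂0] at this; simpa using this
  have hβHpos : 0 < βH := lt_trans one_pos hβH1
  have hychain : ∀ j ≤ M, βH ^ j * y 0 ≤ y j := by
    intro j hj
    induction j with
    | zero => simp
    | succ j ih =>
      have hj' : j ≤ M := le_trans (Nat.le_succ j) hj
      have h1 := ih hj'
      have h2 := hstep2 (τ j) (hτ j hj') (y j) (hyH j hj')
      have h3 := hyrec (j + 1) (Nat.succ_le_succ (Nat.zero_le j)) hj
      simp only [Nat.add_sub_cancel] at h3
      rw [h3]
      calc βH ^ (j + 1) * y 0 = βH * (βH ^ j * y 0) := by ring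
        _ ≤ βH * y j := mul_le_mul_of_nonneg_left h1 hβHpos.le
        _ ≤ fs (τ j) (y j) := h2
  have hkey : βH ^ M * lam₀ ^ (N + 1) ≤ 1 := by
    have h1 := hychain M le_rfl
    have h2 := (hyH M le_rfl).2
    have h3 : βH ^ M * (lam₀ ^ (N + 1) * δ) ≤ βH ^ M * y 0 :=
      mul_le_mul_of_nonneg_left hy0low (pow_nonneg hβHpos.le M)
    have h4 : (βH ^ M * lam₀ ^ (N + 1)) * δ ≤ 1 * δ := by
      rw [one_mul, mul_assoc]
      linarith
    exact (mul_le_mul_iff_of_pos_right hδpos).mp h4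
  have hlogkey : (M:ℝ) * lh ≤ ((N:ℝ) + 1) * (-ll) := by
    have h1 : Real.log (βH ^ M * lam₀ ^ (N + 1)) ≤ 0 := by
      calc Real.log (βH ^ M * lam₀ ^ (N + 1)) ≤ Real.log 1 :=
            Real.log_le_log (by positivity) hkey
        _ = 0 := Real.log_one
    rw [Real.log_mul (by positivity) (by positivity), Real.log_pow, Real.log_pow] at h1
    push_cast at h1
    linarith
  -- rewrite the hypotheses on the constants
  rw [abs_of_neg hllneg, abs_of_neg hll'neg] at hstar
  rw [abs_of_neg hllneg] at hL2
  have hL3' : (L:ℝ) * lb + lg < ((L:ℝ) + 1) * lp := by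
    rw [Real.log_mul (by positivity) hγpos.ne', Real.log_pow] at hL3
    have hL1' : (0:ℝ) < (L:ℝ) + 1 := by positivity
    rw [div_lt_iff₀ hL1'] at hL3
    linarith
  -- final arithmetic
  rw [habs]
  have hNM : (0:ℝ) < (N:ℝ) + (M:ℝ) + 2 := by positivity
  have hgoal : (N:ℝ) * ll' + lg + ((M:ℝ) + 1) * lb < ((N:ℝ) + (M:ℝ) + 2) * lp := by
    have hL1' : (1:ℝ) ≤ (L:ℝ) := by exact_mod_cast hL1
    have hcases : (M:ℝ) + 1 ≤ (L:ℝ) ∨ (L:ℝ) ≤ (M:ℝ) := by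
      rcases le_or_gt (M + 1) L with h | h
      · left; exact_mod_cast h
      · right; exact_mod_cast Nat.lt_succ_iff.mp h
    exact Stmt3Aux.arith_key (N:ℝ) (M:ℝ) (L:ℝ) lb lp lh ll ll' lg (Nat.cast_nonneg N)
      (Nat.cast_nonneg M) hL1' hlbpos hlppos hlhpos hllneg hll'neg hlgneg hlplb hlogkey
      hstar hL2 hL3' hcases
  calc (1 / ((N:ℝ) + (M:ℝ) + 2)) * Real.log (Dt * γ * Dh)
      ≤ (1 / ((N:ℝ) + (M:ℝ) + 2)) * ((N:ℝ) * ll' + lg + ((M:ℝ) + 1) * lb) :=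
        mul_le_mul_of_nonneg_left hlogD (by positivity)
    _ < lp := by
        rw [mul_comm, ← div_eq_mul_one_div, div_lt_iff₀ hNM]
        linarith

end
end

section
/- (Spectrum of ergodic measures.) Assume (F0), (F1), (F2) and (F012), and set χ̃ := sup{χ̄(p,ξ) : (p,ξ) ∉ E}. Then every G-invariant ergodic Borel probability measure μ with μ(Λ_G)=1 satisfies χ(μ) ∈ [log λ₀, χ̃] ∪ [log β⁻, log β⁺]. More precisely, if μ(Λ₀₂)=1 then χ(μ) ∈ [log β⁻, log β⁺], and if μ(Λ₀₂)=0 then χ(μ) ∈ [log λ₀, χ̃]. -/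
open Set Filter MeasureTheory

noncomputable section

structure HypFam (fs : Fin 3 → ℝ → ℝ) (lam₀ M : ℝ) : Prop where
  lam_pos : 0 < lam₀
  lam_le_one : lam₀ ≤ 1
  one_lt_M : 1 < M
  diff : ∀ i, Differentiable ℝ (fs i)
  maps : ∀ i, Set.MapsTo (fs i) (Set.Icc 0 1) (Set.Icc 0 1)
  dlow : ∀ i, ∀ x ∈ Set.Icc (0:ℝ) 1, lam₀ ≤ |deriv (fs i) x|
  dhigh : ∀ i, ∀ x ∈ Set.Icc (0:ℝ) 1, |deriv (fs i) x| ≤ M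
  zero_fix : ∀ i, i ≠ 1 → fs i 0 = 0
  zero_iff : ∀ i, i ≠ 1 → ∀ x ∈ Set.Icc (0:ℝ) 1, (fs i x = 0 ↔ x = 0)

namespace HypFam

variable {fs : Fin 3 → ℝ → ℝ} {lam₀ M : ℝ} (h : HypFam fs lam₀ M)
include h

theorem seq_mem (ξ : ℕ → Fin 3) {x : ℝ} (hx : x ∈ Set.Icc (0:ℝ) 1) :
    ∀ n, seqComp fs ξ n x ∈ Set.Icc (0:ℝ) 1 := by
  intro n
  induction n with
  | zero => exact hx
  | succ n ih => exact h.maps (ξ n) ih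

theorem seq_diff (ξ : ℕ → Fin 3) : ∀ n, Differentiable ℝ (seqComp fs ξ n) := by
  intro n
  induction n with
  | zero => exact differentiable_id
  | succ n ih => exact (h.diff (ξ n)).comp ih

theorem deriv_eq_prod (ξ : ℕ → Fin 3) (x : ℝ) :
    ∀ n, deriv (seqComp fs ξ n) x
      = ∏ k ∈ Finset.range n, deriv (fs (ξ k)) (seqComp fs ξ k x) := by
  intro n
  induction n with
  | zero => simp [seqComp]
  | succ n ih =>
    have : seqComp fs ξ (n+1) = (fs (ξ n)) ∘ (seqComp fs ξ n) := rfl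
    rw [this, deriv_comp x ((h.diff (ξ n)).differentiableAt)
      ((h.seq_diff ξ n).differentiableAt), Finset.prod_range_succ, ih]
    ring

theorem log_deriv_eq_sum (ξ : ℕ → Fin 3) {x : ℝ} (hx : x ∈ Set.Icc (0:ℝ) 1) (n : ℕ) :
    Real.log |deriv (seqComp fs ξ n) x|
      = ∑ k ∈ Finset.range n, Real.log |deriv (fs (ξ k)) (seqComp fs ξ k x)| := by
  rw [h.deriv_eq_prod ξ x n, Finset.abs_prod, Real.log_prod]
  intro k _
  exact ne_of_gt (lt_of_lt_of_le h.lam_pos (h.dlow (ξ k) _ (h.seq_mem ξ hx k)))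

theorem log_term_bounds {i : Fin 3} {z : ℝ} (hz : z ∈ Set.Icc (0:ℝ) 1) :
    Real.log lam₀ ≤ Real.log |deriv (fs i) z| ∧ Real.log |deriv (fs i) z| ≤ Real.log M := by
  have h1 := h.dlow i z hz
  have h2 := h.dhigh i z hz
  constructor
  · exact Real.log_le_log h.lam_pos h1
  · exact Real.log_le_log (lt_of_lt_of_le h.lam_pos h1) h2

theorem log_deriv_bounds (ξ : ℕ → Fin 3) {x : ℝ} (hx : x ∈ Set.Icc (0:ℝ) 1) (n : ℕ) :
    (n : ℝ) * Real.log lam₀ ≤ Real.log |deriv (seqComp fs ξ n) x| ∧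
      Real.log |deriv (seqComp fs ξ n) x| ≤ (n : ℝ) * Real.log M := by
  rw [h.log_deriv_eq_sum ξ hx n]
  constructor
  · have h1 : ∑ _k ∈ Finset.range n, Real.log lam₀
        ≤ ∑ k ∈ Finset.range n, Real.log |deriv (fs (ξ k)) (seqComp fs ξ k x)| :=
      Finset.sum_le_sum fun k _ => (h.log_term_bounds (h.seq_mem ξ hx k)).1
    simpa [Finset.sum_const, Finset.card_range, nsmul_eq_mul] using h1
  · have h1 : ∑ k ∈ Finset.range n, Real.log |deriv (fs (ξ k)) (seqComp fs ξ k x)|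
        ≤ ∑ _k ∈ Finset.range n, Real.log M :=
      Finset.sum_le_sum fun k _ => (h.log_term_bounds (h.seq_mem ξ hx k)).2
    simpa [Finset.sum_const, Finset.card_range, nsmul_eq_mul] using h1

theorem avg_bounds (ξ : ℕ → Fin 3) {x : ℝ} (hx : x ∈ Set.Icc (0:ℝ) 1) {n : ℕ} (hn : 1 ≤ n) :
    Real.log lam₀ ≤ (1 / (n : ℝ)) * Real.log |deriv (seqComp fs ξ n) x| ∧
      (1 / (n : ℝ)) * Real.log |deriv (seqComp fs ξ n) x| ≤ Real.log M := by
  have hn' : (0:ℝ) < (n:ℝ) := by exact_mod_cast hn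
  obtain ⟨hl, hu⟩ := h.log_deriv_bounds ξ hx n
  constructor
  · rw [one_div, ← div_eq_inv_mul, le_div_iff₀ hn']
    linarith [hl]
  · rw [one_div, ← div_eq_inv_mul, div_le_iff₀ hn']
    linarith [hu]

theorem lyap_bounds (ξ : ℕ → Fin 3) {x : ℝ} (hx : x ∈ Set.Icc (0:ℝ) 1) :
    Real.log lam₀ ≤ lyapUpper fs x ξ ∧ lyapUpper fs x ξ ≤ Real.log M := by
  set u : ℕ → ℝ := fun n => (1 / (n : ℝ)) * Real.log |deriv (seqComp fs ξ n) x| with hu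
  have hev_low : ∀ᶠ n in atTop, Real.log lam₀ ≤ u n :=
    eventually_atTop.2 ⟨1, fun n hn => (h.avg_bounds ξ hx hn).1⟩
  have hev_high : ∀ᶠ n in atTop, u n ≤ Real.log M :=
    eventually_atTop.2 ⟨1, fun n hn => (h.avg_bounds ξ hx hn).2⟩
  have hbdd : IsBoundedUnder (· ≤ ·) atTop u := ⟨Real.log M, hev_high⟩
  have hbdd' : IsBoundedUnder (· ≥ ·) atTop u := ⟨Real.log lam₀, hev_low⟩
  constructor
  · exact le_limsup_of_frequently_le hev_low.frequently hbdd
  · exact limsup_le_of_le hbdd'.isCoboundedUnder_le hev_high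

omit h in
theorem iterate_fst (k : ℕ) (p : XSp) :
    ((Gmap fs)^[k] p).1 = fun i => p.1 (i + (k : ℤ)) := by
  induction k with
  | zero => simp
  | succ k ih =>
    rw [Function.iterate_succ_apply']
    funext i
    show ((Gmap fs)^[k] p).1 (i + 1) = p.1 (i + ((k:ℕ)+1 : ℤ))
    rw [ih]
    push_cast
    ring_nf

theorem iterate_snd (k : ℕ) (p : XSp) :
    ((((Gmap fs)^[k] p).2 : ℝ)) = seqComp fs (fun n => p.1 (n : ℤ)) k (p.2 : ℝ) := by
  induction k with
  | zero => simp [seqComp]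
  | succ k ih =>
    rw [Function.iterate_succ_apply']
    show ((Set.projIcc 0 1 (by norm_num) (fs (((Gmap fs)^[k] p).1 0) ((((Gmap fs)^[k] p).2 : ℝ)))) : ℝ) = _
    rw [iterate_fst, ih]
    have hmem : fs (p.1 ((0:ℤ) + (k:ℤ))) (seqComp fs (fun n => p.1 (n : ℤ)) k (p.2 : ℝ))
        ∈ Set.Icc (0:ℝ) 1 := h.maps _ (h.seq_mem _ p.2.2 k)
    rw [Set.projIcc_of_mem _ hmem]
    show fs (p.1 ((0:ℤ) + (k:ℤ))) _ = fs (p.1 ((k:ℕ) : ℤ)) _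
    norm_num [seqComp]

theorem phi_iterate (p : XSp) (k : ℕ) :
    phiC fs ((Gmap fs)^[k] p)
      = Real.log |deriv (fs (p.1 (k : ℤ))) (seqComp fs (fun n => p.1 (n : ℤ)) k (p.2 : ℝ))| := by
  unfold phiC
  rw [iterate_fst, h.iterate_snd]
  norm_num

theorem lyap_eq_limsup_birkhoff (p : XSp) :
    lyapUpper fs (p.2 : ℝ) (fun n => p.1 (n : ℤ))
      = Filter.limsup
          (fun n : ℕ => (1 / (n : ℝ)) * ∑ k ∈ Finset.range n, phiC fs ((Gmap fs)^[k] p))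
          Filter.atTop := by
  unfold lyapUpper
  congr 1
  funext n
  rw [h.log_deriv_eq_sum _ p.2.2 n]
  congr 1
  exact Finset.sum_congr rfl fun k _ => (h.phi_iterate p k).symm

theorem phi_mem (p : XSp) :
    Real.log lam₀ ≤ phiC fs p ∧ phiC fs p ≤ Real.log M :=
  h.log_term_bounds p.2.2

theorem preimage_lam02 : Gmap fs ⁻¹' Lam02 = Lam02 := by
  ext p
  constructor
  · rintro ⟨hξ, hx⟩
    have hall : ∀ j, p.1 j ≠ 1 := by
      intro j
      have h' : p.1 (j - 1 + 1) ≠ 1 := hξ (j - 1)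
      simpa using h'
    refine ⟨hall, ?_⟩
    have hmem : fs (p.1 0) ((p.2 : ℝ)) ∈ Set.Icc (0:ℝ) 1 := h.maps _ p.2.2
    have hx' : fs (p.1 0) ((p.2 : ℝ)) = 0 := by
      have : ((Set.projIcc 0 1 (by norm_num) (fs (p.1 0) ((p.2 : ℝ)))) : ℝ) = 0 := hx
      rwa [Set.projIcc_of_mem _ hmem] at this
    exact (h.zero_iff _ (hall 0) _ p.2.2).1 hx'
  · rintro ⟨hξ, hx⟩
    refine ⟨fun i => hξ (i + 1), ?_⟩
    show ((Set.projIcc 0 1 (by norm_num) (fs (p.1 0) ((p.2 : ℝ)))) : ℝ) = 0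
    rw [hx, h.zero_fix _ (hξ 0)]
    rw [Set.projIcc_of_mem _ (by norm_num : (0:ℝ) ∈ Set.Icc (0:ℝ) 1)]

end HypFam

theorem measurable_coe_snd : Measurable (fun p : XSp => (p.2 : ℝ)) :=
  measurable_subtype_coe.comp measurable_snd

theorem measurable_eval_fst (j : ℤ) : Measurable (fun p : XSp => p.1 j) :=
  (measurable_pi_apply j).comp measurable_fst

theorem measurable_phiC (fs : Fin 3 → ℝ → ℝ) : Measurable (phiC fs) := by
  have hg : ∀ i : Fin 3, Measurable (fun q : XSp => Real.log |deriv (fs i) ((q.2 : ℝ))|) :=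
    fun i => Real.measurable_log.comp ((measurable_deriv (fs i)).comp measurable_coe_snd).abs
  have hs : ∀ i : Fin 3, MeasurableSet {q : XSp | q.1 0 = i} :=
    fun i => measurable_eval_fst 0 (measurableSet_singleton i)
  have : phiC fs = fun q : XSp =>
      if q.1 0 = 0 then Real.log |deriv (fs 0) ((q.2 : ℝ))|
      else if q.1 0 = 1 then Real.log |deriv (fs 1) ((q.2 : ℝ))|
      else Real.log |deriv (fs 2) ((q.2 : ℝ))| := by
    funext q
    by_cases h0 : q.1 0 = 0
    · simp [phiC, h0]
    · by_cases h1 : q.1 0 = 1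
      · simp [phiC, h0, h1]
      · have h2 : q.1 0 = 2 := by
          have : ∀ a : Fin 3, a ≠ 0 → a ≠ 1 → a = 2 := by decide
          exact this _ h0 h1
        simp [phiC, h0, h1, h2]
  rw [this]
  exact Measurable.ite (hs 0) (hg 0) (Measurable.ite (hs 1) (hg 1) (hg 2))

theorem measurableSet_lam02 : MeasurableSet Lam02 := by
  have : Lam02 = (⋂ i : ℤ, {p : XSp | p.1 i ≠ 1}) ∩ {p : XSp | (p.2 : ℝ) = 0} := by
    ext p
    simp [Lam02, Set.mem_iInter]
  rw [this]
  exact MeasurableSet.inter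
    (MeasurableSet.iInter fun i => (measurable_eval_fst i (measurableSet_singleton 1)).compl)
    (measurable_coe_snd (measurableSet_singleton 0))


theorem exceptional_null {fs : Fin 3 → ℝ → ℝ} {lam₀ M : ℝ} (h : HypFam fs lam₀ M)
    (μ : Measure XSp) [IsProbabilityMeasure μ] (herg : Ergodic (Gmap fs) μ)
    (hL : μ Lam02 = 0) :
    μ {p : XSp | exceptional fs ((p.2 : ℝ)) (fun n => p.1 (n : ℤ))} = 0 := by
  have hG : Measurable (Gmap fs) := herg.measurable
  set A : Set XSp := {p | ((p.2 : ℝ) = 0) ∧ ∀ j : ℤ, 0 ≤ j → p.1 j ≠ 1} with hA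
  have hmeas_cond : ∀ j : ℤ, MeasurableSet {p : XSp | 0 ≤ j → p.1 j ≠ 1} := by
    intro j
    by_cases hj : 0 ≤ j
    · have : {p : XSp | 0 ≤ j → p.1 j ≠ 1} = {p : XSp | p.1 j = 1}ᶜ := by
        ext p; simp [hj]
      rw [this]
      exact (measurable_eval_fst j (measurableSet_singleton 1)).compl
    · have : {p : XSp | 0 ≤ j → p.1 j ≠ 1} = Set.univ := by
        ext p; simp [hj]
      rw [this]; exact MeasurableSet.univ
  have hAmeas : MeasurableSet A := by
    have : A = {p : XSp | (p.2 : ℝ) = 0} ∩ ⋂ j : ℤ, {p : XSp | 0 ≤ j → p.1 j ≠ 1} := by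
      ext p; simp [hA, Set.mem_iInter]
    rw [this]
    exact MeasurableSet.inter (measurable_coe_snd (measurableSet_singleton 0))
      (MeasurableSet.iInter hmeas_cond)
  have hA0 : μ A = 0 := by
    by_contra hA0
    set T : Set XSp := {p | ∀ j : ℤ, 0 ≤ j → p.1 j ≠ 1} with hT
    have hTmeas : MeasurableSet T := by
      have : T = ⋂ j : ℤ, {p : XSp | 0 ≤ j → p.1 j ≠ 1} := by
        ext p; simp [hT, Set.mem_iInter]
      rw [this]; exact MeasurableSet.iInter hmeas_cond
    have hTsub : T ⊆ Gmap fs ⁻¹' T := by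
      intro p hp j hj
      show p.1 (j + 1) ≠ 1
      exact hp (j + 1) (by omega)
    have hstep : ∀ n : ℕ, (Gmap fs)^[n] ⁻¹' T ⊆ (Gmap fs)^[n + 1] ⁻¹' T := by
      intro n
      rw [Function.iterate_succ', Set.preimage_comp]
      exact Set.preimage_mono hTsub
    have hmono : Monotone fun n : ℕ => (Gmap fs)^[n] ⁻¹' T := monotone_nat_of_le_succ hstep
    set Tinf : Set XSp := ⋃ n : ℕ, (Gmap fs)^[n] ⁻¹' T with hTinf
    have hinv : Gmap fs ⁻¹' Tinf = Tinf := by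
      apply subset_antisymm
      · intro p hp
        obtain ⟨n, hn⟩ := Set.mem_iUnion.1 hp
        exact Set.mem_iUnion.2 ⟨n + 1, by rwa [Set.mem_preimage, Function.iterate_succ_apply]⟩
      · apply Set.iUnion_subset
        intro n p hp
        have hp' : (Gmap fs)^[n + 1] p ∈ T := hstep n hp
        have : (Gmap fs)^[n] (Gmap fs p) ∈ T := by rwa [← Function.iterate_succ_apply]
        exact Set.mem_iUnion.2 ⟨n, this⟩
    have hTinfmeas : MeasurableSet Tinf :=
      MeasurableSet.iUnion fun n => (hG.iterate n) hTmeas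
    have hpres : ∀ n : ℕ, μ ((Gmap fs)^[n] ⁻¹' T) = μ T := fun n =>
      (herg.toMeasurePreserving.iterate n).measure_preimage hTmeas.nullMeasurableSet
    have hTinfμ : μ Tinf = μ T := by
      rw [hTinf, hmono.directed_le.measure_iUnion]
      simp [hpres]
    have hT1 : μ T = 1 := by
      rcases herg.ae_empty_or_univ hTinfmeas hinv with h' | h'
      · exfalso
        have h1 : μ Tinf = 0 := ae_eq_empty.1 h'
        have hAT : A ⊆ Tinf := fun p hp =>
          Set.mem_iUnion.2 ⟨0, by exact hp.2⟩
        exact hA0 (measure_mono_null hAT h1)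
      · rw [← hTinfμ]
        have := measure_congr h'
        simpa using this
    have hVeq : ∀ j : ℤ, μ {p : XSp | p.1 (j + 1) = 1} = μ {p : XSp | p.1 j = 1} := by
      intro j
      have hVpre : Gmap fs ⁻¹' {p : XSp | p.1 j = 1} = {p : XSp | p.1 (j + 1) = 1} := rfl
      rw [← hVpre]
      exact herg.toMeasurePreserving.measure_preimage
        (measurable_eval_fst j (measurableSet_singleton 1)).nullMeasurableSet
    have hVconst : ∀ j : ℤ, μ {p : XSp | p.1 j = 1} = μ {p : XSp | p.1 0 = 1} := by
      intro j
      induction j using Int.induction_on with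
      | zero => rfl
      | succ k ih => rw [hVeq (k : ℤ)]; exact ih
      | pred k ih =>
        have h2 := hVeq (-(k : ℤ) - 1)
        rw [show (-(k : ℤ) - 1 + 1) = -(k : ℤ) by ring] at h2
        rw [← h2]; exact ih
    have hV0 : μ {p : XSp | p.1 0 = 1} = 0 := by
      have hsub : {p : XSp | p.1 0 = 1} ⊆ Tᶜ := fun p hp hpT => hpT 0 le_rfl hp
      have hTc : μ Tᶜ = 0 := by
        rw [measure_compl hTmeas (measure_ne_top μ T), hT1, measure_univ]
        simp
      exact measure_mono_null hsub hTc
    have hXic : μ {p : XSp | ¬ ∀ i : ℤ, p.1 i ≠ 1} = 0 := by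
      have : {p : XSp | ¬ ∀ i : ℤ, p.1 i ≠ 1} = ⋃ j : ℤ, {p : XSp | p.1 j = 1} := by
        ext p
        simp [Set.mem_iUnion]
      rw [this]
      exact measure_iUnion_null fun j => by rw [hVconst j]; exact hV0
    have hZ0 : μ {p : XSp | (p.2 : ℝ) = 0} = 0 := by
      have hsub : {p : XSp | (p.2 : ℝ) = 0}
          ⊆ Lam02 ∪ {p : XSp | ¬ ∀ i : ℤ, p.1 i ≠ 1} := by
        intro p hp
        by_cases hξ : ∀ i : ℤ, p.1 i ≠ 1
        · exact Or.inl ⟨hξ, hp⟩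
        · exact Or.inr hξ
      exact measure_mono_null hsub (measure_union_null hL hXic)
    exact hA0 (measure_mono_null (fun p hp => hp.1) hZ0)
  have hsub : {p : XSp | exceptional fs ((p.2 : ℝ)) (fun n => p.1 (n : ℤ))}
      ⊆ ⋃ m : ℕ, (Gmap fs)^[m] ⁻¹' A := by
    rintro p ⟨m, hm0, hmξ⟩
    refine Set.mem_iUnion.2 ⟨m, ?_, ?_⟩
    · show (((Gmap fs)^[m] p).2 : ℝ) = 0
      rw [h.iterate_snd]
      exact hm0
    · intro j hj
      show ((Gmap fs)^[m] p).1 j ≠ 1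
      rw [HypFam.iterate_fst]
      show p.1 (j + (m : ℤ)) ≠ 1
      have hcast : j + (m : ℤ) = ((j.toNat + m : ℕ) : ℤ) := by
        push_cast [Int.toNat_of_nonneg hj]
        ring
      rw [hcast]
      rcases hmξ (j.toNat + m) (Nat.le_add_left m j.toNat) with h' | h' <;>
        · simp only at h'
          rw [h']
          decide
  exact measure_mono_null hsub (measure_iUnion_null fun m => by
    rw [(herg.toMeasurePreserving.iterate m).measure_preimage hAmeas.nullMeasurableSet]
    exact hA0)


theorem exists_good_point {fs : Fin 3 → ℝ → ℝ} {lam₀ M : ℝ} (h : HypFam fs lam₀ M)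
    (μ : Measure XSp) [IsProbabilityMeasure μ] (herg : Ergodic (Gmap fs) μ)
    (hL : μ Lam02 = 0) {ε : ℝ} (hε : 0 < ε)
    (hcase : Real.log lam₀ < chiOf fs μ - ε) :
    ∃ p : XSp, ¬ exceptional fs ((p.2 : ℝ)) (fun n => p.1 (n : ℤ)) ∧
      chiOf fs μ - ε ≤ lyapUpper fs ((p.2 : ℝ)) (fun n => p.1 (n : ℤ)) := by
  classical
  set φ : XSp → ℝ := phiC fs with hφ
  set c : ℝ := chiOf fs μ with hc
  set m₀ : ℝ := Real.log lam₀ with hm₀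
  set M' : ℝ := Real.log M with hM'
  have hM'pos : 0 ≤ M' := le_of_lt (Real.log_pos h.one_lt_M)
  have hφmeas : Measurable φ := measurable_phiC fs
  have hφlow : ∀ p, m₀ ≤ φ p := fun p => (h.phi_mem p).1
  have hφhigh : ∀ p, φ p ≤ M' := fun p => (h.phi_mem p).2
  have hbnd : ∀ p, ‖φ p‖ ≤ max |m₀| |M'| := by
    intro p
    rw [Real.norm_eq_abs, abs_le]
    constructor
    · have := neg_abs_le m₀
      have := le_max_left |m₀| |M'|
      linarith [hφlow p]
    · have := le_abs_self M'
      have := le_max_right |m₀| |M'|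
      linarith [hφhigh p]
  have hφint : Integrable φ μ :=
    (integrable_const (max |m₀| |M'|)).mono' hφmeas.aestronglyMeasurable (ae_of_all _ hbnd)
  have hG : Measurable (Gmap fs) := herg.measurable
  set Ak : ℕ → XSp → ℝ :=
    fun n p => (1 / (n : ℝ)) * ∑ k ∈ Finset.range n, φ ((Gmap fs)^[k] p) with hAk
  have hφGk_meas : ∀ k : ℕ, Measurable fun p => φ ((Gmap fs)^[k] p) :=
    fun k => hφmeas.comp (hG.iterate k)
  have hAkmeas : ∀ n, Measurable (Ak n) := fun n =>
    (Finset.measurable_sum _ fun k _ => hφGk_meas k).const_mul _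
  have hφGk_int : ∀ k : ℕ, Integrable (fun p => φ ((Gmap fs)^[k] p)) μ := fun k =>
    (integrable_const (max |m₀| |M'|)).mono' (hφGk_meas k).aestronglyMeasurable
      (ae_of_all _ fun p => hbnd _)
  have hint_comp : ∀ k : ℕ, ∫ p, φ ((Gmap fs)^[k] p) ∂μ = c := by
    intro k
    have hmp := herg.toMeasurePreserving.iterate k
    have : ∫ q, φ q ∂(Measure.map ((Gmap fs)^[k]) μ) = ∫ p, φ ((Gmap fs)^[k] p) ∂μ :=
      integral_map (hmp.measurable.aemeasurable)
        (by rw [hmp.map_eq]; exact hφmeas.aestronglyMeasurable)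
    rw [← this, hmp.map_eq]
    rfl
  have hAk_int : ∀ n, Integrable (Ak n) μ := fun n =>
    (integrable_finset_sum _ fun k _ => hφGk_int k).const_mul _
  have hAk_avg : ∀ n : ℕ, 1 ≤ n → ∫ p, Ak n p ∂μ = c := by
    intro n hn
    have hn' : ((n : ℝ)) ≠ 0 := by
      simp only [ne_eq, Nat.cast_eq_zero]
      omega
    have h1 : ∫ p, (∑ k ∈ Finset.range n, φ ((Gmap fs)^[k] p)) ∂μ = (n : ℝ) * c := by
      rw [integral_finset_sum _ fun k _ => hφGk_int k]
      simp only [hint_comp]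
      simp [Finset.sum_const, Finset.card_range, mul_comm]
    calc ∫ p, Ak n p ∂μ = (1 / (n : ℝ)) * ∫ p, (∑ k ∈ Finset.range n, φ ((Gmap fs)^[k] p)) ∂μ :=
          integral_const_mul _ _
    _ = c := by rw [h1]; field_simp
  have hAk_eq : ∀ (p : XSp) (n : ℕ),
      Ak n p = (1 / (n : ℝ))
        * Real.log |deriv (seqComp fs (fun k : ℕ => p.1 (k : ℤ)) n) ((p.2 : ℝ))| := by
    intro p n
    have : ∑ k ∈ Finset.range n, φ ((Gmap fs)^[k] p)
        = Real.log |deriv (seqComp fs (fun k : ℕ => p.1 (k : ℤ)) n) ((p.2 : ℝ))| := by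
      rw [h.log_deriv_eq_sum _ p.2.2 n]
      exact Finset.sum_congr rfl fun k _ => h.phi_iterate p k
    rw [hAk]
    simp only
    rw [this]
  have hAk_bound : ∀ n : ℕ, 1 ≤ n → ∀ p, m₀ ≤ Ak n p ∧ Ak n p ≤ M' := by
    intro n hn p
    rw [hAk_eq p n]
    exact h.avg_bounds _ p.2.2 hn
  set u : ℕ → XSp → ENNReal := fun n p => ENNReal.ofReal (Ak n p - m₀) with hu
  have humeas : ∀ n, Measurable (u n) := fun n =>
    ENNReal.measurable_ofReal.comp ((hAkmeas n).sub measurable_const)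
  have hubound : ∀ n p, u n p ≤ ENNReal.ofReal (M' - m₀) := by
    intro n p
    rcases Nat.eq_zero_or_pos n with rfl | hn
    · have : Ak 0 p = 0 := by simp [hAk]
      rw [hu]
      simp only [this]
      apply ENNReal.ofReal_le_ofReal
      have : m₀ ≤ 0 := by
        rw [hm₀]
        exact Real.log_nonpos (le_of_lt h.lam_pos) h.lam_le_one
      linarith
    · exact ENNReal.ofReal_le_ofReal (by linarith [(hAk_bound n hn p).2])
  have hulint : ∀ n : ℕ, 1 ≤ n → ∫⁻ p, u n p ∂μ = ENNReal.ofReal (c - m₀) := by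
    intro n hn
    have hint' : Integrable (fun p => Ak n p - m₀) μ := (hAk_int n).sub (integrable_const m₀)
    have hkey := ofReal_integral_eq_lintegral_ofReal hint'
      (ae_of_all _ fun p => sub_nonneg.2 (hAk_bound n hn p).1)
    rw [← hkey]
    congr 1
    rw [integral_sub (hAk_int n) (integrable_const m₀), hAk_avg n hn]
    simp [measure_univ]
  set g : XSp → ENNReal := fun p => Filter.limsup (fun n => u n p) Filter.atTop with hg
  have hgmeas : Measurable g := Measurable.limsup humeas
  have hfatou : ENNReal.ofReal (c - m₀) ≤ ∫⁻ p, g p ∂μ := by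
    have hrev := limsup_lintegral_le (μ := μ) (f := u) (fun _ => ENNReal.ofReal (M' - m₀))
      humeas (fun n => ae_of_all _ (hubound n))
      (by simp [lintegral_const, measure_univ])
    have hconst : Filter.limsup (fun n : ℕ => ∫⁻ p, u n p ∂μ) Filter.atTop
        = ENNReal.ofReal (c - m₀) := by
      rw [Filter.limsup_congr (eventually_atTop.2 ⟨1, fun n hn => hulint n hn⟩)]
      exact Filter.limsup_const _
    rw [← hconst]
    exact hrev
  have hg_eq : ∀ p : XSp,
      g p = ENNReal.ofReal (lyapUpper fs ((p.2 : ℝ)) (fun n => p.1 (n : ℤ)) - m₀) := by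
    intro p
    set v : ℕ → ℝ := fun n => Ak n p with hv
    have hbddv : Filter.IsBoundedUnder (· ≤ ·) Filter.atTop v :=
      ⟨M', eventually_atTop.2 ⟨1, fun n hn => (hAk_bound n hn p).2⟩⟩
    have hbddv' : Filter.IsBoundedUnder (· ≥ ·) Filter.atTop v :=
      ⟨m₀, eventually_atTop.2 ⟨1, fun n hn => (hAk_bound n hn p).1⟩⟩
    have hmono : Monotone (fun t : ℝ => ENNReal.ofReal (t - m₀)) := fun a b hab =>
      ENNReal.ofReal_le_ofReal (by linarith)
    have hcont : ContinuousAt (fun t : ℝ => ENNReal.ofReal (t - m₀))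
        (Filter.limsup v Filter.atTop) :=
      (ENNReal.continuous_ofReal.comp (continuous_id.sub continuous_const)).continuousAt
    have hkey := hmono.map_limsup_of_continuousAt v hcont hbddv hbddv'.isCoboundedUnder_le
    have hlyap : lyapUpper fs ((p.2 : ℝ)) (fun n => p.1 (n : ℤ)) = Filter.limsup v Filter.atTop := by
      rw [hv]
      unfold lyapUpper
      congr 1
      funext n
      rw [hAk_eq p n]
    rw [hlyap, hkey]
    rfl
  set d : ENNReal := ENNReal.ofReal (c - ε - m₀) with hd
  have hdlt : d < ENNReal.ofReal (c - m₀) :=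
    (ENNReal.ofReal_lt_ofReal_iff (by linarith)).2 (by linarith)
  have hSpos : μ {p : XSp | d ≤ g p} ≠ 0 := by
    intro h0
    have hae : ∀ᵐ p ∂μ, g p ≤ d := by
      have h1 : ∀ᵐ p ∂μ, p ∉ {p : XSp | d ≤ g p} := by
        rw [ae_iff]
        simpa using h0
      exact h1.mono fun p hp => le_of_lt (not_le.1 hp)
    have hle : ∫⁻ p, g p ∂μ ≤ d := by
      calc ∫⁻ p, g p ∂μ ≤ ∫⁻ _, d ∂μ := lintegral_mono_ae hae
      _ = d := by simp [lintegral_const, measure_univ]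
    exact absurd (le_trans hfatou hle) (not_le.2 hdlt)
  have hEnull := exceptional_null h μ herg hL
  have hne : ({p : XSp | d ≤ g p}
      \ {p : XSp | exceptional fs ((p.2 : ℝ)) (fun n => p.1 (n : ℤ))}).Nonempty := by
    rw [Set.nonempty_iff_ne_empty]
    intro hcon
    apply hSpos
    have hsub : {p : XSp | d ≤ g p}
        ⊆ {p : XSp | exceptional fs ((p.2 : ℝ)) (fun n => p.1 (n : ℤ))} := by
      intro p hp
      by_contra hp'
      exact Set.eq_empty_iff_forall_notMem.1 hcon p ⟨hp, hp'⟩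
    exact measure_mono_null hsub hEnull
  obtain ⟨p, hpS, hpE⟩ := hne
  refine ⟨p, hpE, ?_⟩
  have hdg : d ≤ g p := hpS
  rw [hg_eq p, hd] at hdg
  have hlow : m₀ ≤ lyapUpper fs ((p.2 : ℝ)) (fun n => p.1 (n : ℤ)) :=
    (h.lyap_bounds _ p.2.2).1
  have := (ENNReal.ofReal_le_ofReal_iff (by linarith)).1 hdg
  linarith


/-- spectrum of ergodic measures. -/
theorem stmt5 (f₀ f₁ f₂ : ℝ → ℝ) (β₀ lam₀ γ β₂ δ βpr βH lampr : ℝ) (L : ℕ)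
    (h0 : F0cond f₀ β₀ lam₀) (h1 : F1cond f₁ γ lam₀) (h2 : F2cond f₂ β₂ lam₀)
    (h012 : F012cond f₀ f₁ f₂ γ lam₀ β₀ β₂ δ βpr βH lampr L)
    (μ : Measure XSp) (hprob : IsProbabilityMeasure μ)
    (herg : Ergodic (Gmap ![f₀, f₁, f₂]) μ)
    (hsupp : μ (LamG ![f₀, f₁, f₂]) = 1) :
    chiOf ![f₀, f₁, f₂] μ ∈
        Set.Icc (Real.log lam₀)
          (sSup {c : ℝ | ∃ p ∈ Set.Icc (0:ℝ) 1, ∃ ξ : ℕ → Fin 3,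
            ¬ exceptional ![f₀, f₁, f₂] p ξ ∧ lyapUpper ![f₀, f₁, f₂] p ξ = c}) ∪
        Set.Icc (Real.log (min β₀ β₂)) (Real.log (max β₀ β₂)) ∧
    (μ Lam02 = 1 →
      chiOf ![f₀, f₁, f₂] μ ∈ Set.Icc (Real.log (min β₀ β₂)) (Real.log (max β₀ β₂))) ∧
    (μ Lam02 = 0 →
      chiOf ![f₀, f₁, f₂] μ ∈ Set.Icc (Real.log lam₀)
        (sSup {c : ℝ | ∃ p ∈ Set.Icc (0:ℝ) 1, ∃ ξ : ℕ → Fin 3,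
          ¬ exceptional ![f₀, f₁, f₂] p ξ ∧ lyapUpper ![f₀, f₁, f₂] p ξ = c})) := by
  classical
  obtain ⟨h0c, h0maps, h0mono, h0z, h0one, h0gt, h0d0, h0β, h0d1, h0lampos, h0lam1, h0dlow⟩ := h0
  obtain ⟨h1f, h1γlam, h1γ1⟩ := h1
  obtain ⟨h2c, h2maps, h2mono, h2z, h2d0, h2β, h2dlow, hp₂⟩ := h2
  have h012d := h012.1
  set fs : Fin 3 → ℝ → ℝ := ![f₀, f₁, f₂] with hfs
  have hfs0 : fs 0 = f₀ := rfl
  have hfs1 : fs 1 = f₁ := rfl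
  have hfs2 : fs 2 = f₂ := rfl
  have hγpos : 0 < γ := lt_of_lt_of_le h0lampos h1γlam
  have hf₁' : f₁ = fun x => γ * (1 - x) := funext h1f
  have hd1 : deriv f₁ = fun _ => -γ := by
    funext x
    rw [hf₁']
    have : HasDerivAt (fun x : ℝ => γ * (1 - x)) (γ * (-1)) x :=
      ((hasDerivAt_id x).const_sub 1).const_mul γ
    simpa using this.deriv
  have hfam : HypFam fs lam₀ (max β₀ β₂) := by
    constructor
    · exact h0lampos
    · exact le_of_lt h0lam1
    · exact lt_of_lt_of_le h0β (le_max_left _ _)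
    · intro i
      fin_cases i
      · exact h0c.differentiable one_ne_zero
      · show Differentiable ℝ f₁
        rw [hf₁']
        fun_prop
      · exact h2c.differentiable one_ne_zero
    · intro i
      fin_cases i
      · exact h0maps
      · show Set.MapsTo f₁ (Set.Icc 0 1) (Set.Icc 0 1)
        intro x hx
        rw [h1f]
        constructor
        · have := hx.2
          nlinarith
        · have := hx.1
          nlinarith
      · exact h2maps
    · intro i
      fin_cases i
      · intro x hx
        exact le_trans (h0dlow x hx) (le_abs_self _)
      · intro x _
        show lam₀ ≤ |deriv f₁ x|
        rw [hd1]
        rw [abs_neg, abs_of_pos hγpos]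
        exact h1γlam
      · intro x hx
        exact le_trans (h2dlow x hx) (le_abs_self _)
    · intro i
      fin_cases i
      · intro x hx
        show |deriv f₀ x| ≤ max β₀ β₂
        rw [abs_of_nonneg (le_trans (le_of_lt h0lampos) (h0dlow x hx))]
        exact (h012d x hx).1
      · intro x _
        show |deriv f₁ x| ≤ max β₀ β₂
        rw [hd1]
        rw [abs_neg, abs_of_pos hγpos]
        have : (1:ℝ) ≤ max β₀ β₂ := le_trans (le_of_lt h0β) (le_max_left _ _)
        linarith
      · intro x hx
        show |deriv f₂ x| ≤ max β₀ β₂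
        rw [abs_of_nonneg (le_trans (le_of_lt h0lampos) (h2dlow x hx))]
        exact (h012d x hx).2
    · intro i hi
      fin_cases i
      · exact h0z
      · exact absurd rfl hi
      · exact h2z
    · intro i hi
      fin_cases i
      · intro x hx
        show f₀ x = 0 ↔ x = 0
        constructor
        · intro hfx
          by_contra hx0
          have hxpos : 0 < x := lt_of_le_of_ne hx.1 (Ne.symm hx0)
          have := h0mono (by norm_num : (0:ℝ) ∈ Set.Icc (0:ℝ) 1) hx hxpos
          rw [h0z, hfx] at this
          exact lt_irrefl _ this
        · intro hx0
          rw [hx0, h0z]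
      · exact absurd rfl hi
      · intro x hx
        show f₂ x = 0 ↔ x = 0
        constructor
        · intro hfx
          by_contra hx0
          have hxpos : 0 < x := lt_of_le_of_ne hx.1 (Ne.symm hx0)
          have := h2mono (by norm_num : (0:ℝ) ∈ Set.Icc (0:ℝ) 1) hx hxpos
          rw [h2z, hfx] at this
          exact lt_irrefl _ this
        · intro hx0
          rw [hx0, h2z]
  -- basic facts about `φ` and the Lyapunov-exponent value set
  set S : Set ℝ := {c : ℝ | ∃ p ∈ Set.Icc (0:ℝ) 1, ∃ ξ : ℕ → Fin 3,
      ¬ exceptional fs p ξ ∧ lyapUpper fs p ξ = c} with hS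
  have hSbdd : BddAbove S := by
    refine ⟨Real.log (max β₀ β₂), ?_⟩
    rintro x ⟨p, hp, ξ, hξ, rfl⟩
    exact (hfam.lyap_bounds ξ hp).2
  have hseqfix : ∀ m : ℕ, seqComp fs (fun _ => (0 : Fin 3)) m 1 = 1 := by
    intro m
    induction m with
    | zero => rfl
    | succ m ih =>
      show fs 0 (seqComp fs (fun _ => (0 : Fin 3)) m 1) = 1
      rw [ih, hfs0, h0one]
  have hwit : lyapUpper fs 1 (fun _ => (0 : Fin 3)) ∈ S := by
    refine ⟨1, by norm_num, fun _ => (0 : Fin 3), ?_, rfl⟩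
    rintro ⟨m, hm, -⟩
    rw [hseqfix m] at hm
    norm_num at hm
  have hsSup_ge : Real.log lam₀ ≤ sSup S := by
    refine le_trans ?_ (le_csSup hSbdd hwit)
    exact (hfam.lyap_bounds (fun _ => (0 : Fin 3)) (by norm_num : (1:ℝ) ∈ Set.Icc (0:ℝ) 1)).1
  have hφmeas : Measurable (phiC fs) := measurable_phiC fs
  have hφint : Integrable (phiC fs) μ := by
    refine (integrable_const (max |Real.log lam₀| |Real.log (max β₀ β₂)|)).mono'
      hφmeas.aestronglyMeasurable (ae_of_all _ fun p => ?_)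
    rw [Real.norm_eq_abs, abs_le]
    constructor
    · have h1 := (hfam.phi_mem p).1
      have := neg_abs_le (Real.log lam₀)
      have := le_max_left |Real.log lam₀| |Real.log (max β₀ β₂)|
      linarith
    · have h1 := (hfam.phi_mem p).2
      have := le_abs_self (Real.log (max β₀ β₂))
      have := le_max_right |Real.log lam₀| |Real.log (max β₀ β₂)|
      linarith
  -- Part (2)
  have hpart2 : μ Lam02 = 1 →
      chiOf fs μ ∈ Set.Icc (Real.log (min β₀ β₂)) (Real.log (max β₀ β₂)) := by
    intro hL1
    have hminpos : 0 < min β₀ β₂ := lt_min (lt_trans one_pos h0β) (lt_trans one_pos h2β)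
    have hae : ∀ᵐ p ∂μ, p ∈ Lam02 := by
      rw [ae_iff]
      have : {p : XSp | ¬ p ∈ Lam02} = Lam02ᶜ := rfl
      rw [this, measure_compl measurableSet_lam02 (measure_ne_top μ _), hL1, measure_univ]
      simp
    have hbnd : ∀ᵐ p ∂μ, Real.log (min β₀ β₂) ≤ phiC fs p ∧ phiC fs p ≤ Real.log (max β₀ β₂) := by
      refine hae.mono fun p hp => ?_
      obtain ⟨hξ, hx⟩ := hp
      have h01 : p.1 0 = 0 ∨ p.1 0 = 2 := by
        have : ∀ a : Fin 3, a ≠ 1 → a = 0 ∨ a = 2 := by decide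
        exact this _ (hξ 0)
      rcases h01 with h' | h'
      · have : phiC fs p = Real.log β₀ := by
          unfold phiC
          rw [h', hx, hfs0, h0d0, abs_of_pos (lt_trans one_pos h0β)]
        rw [this]
        exact ⟨Real.log_le_log hminpos (min_le_left _ _),
          Real.log_le_log (lt_trans one_pos h0β) (le_max_left _ _)⟩
      · have : phiC fs p = Real.log β₂ := by
          unfold phiC
          rw [h', hx, hfs2, h2d0, abs_of_pos (lt_trans one_pos h2β)]
        rw [this]
        exact ⟨Real.log_le_log hminpos (min_le_right _ _),
          Real.log_le_log (lt_trans one_pos h2β) (le_max_right _ _)⟩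
    constructor
    · have := integral_mono_ae (integrable_const (Real.log (min β₀ β₂))) hφint
        (hbnd.mono fun p hp => hp.1)
      simpa [chiOf, integral_const, measure_univ] using this
    · have := integral_mono_ae hφint (integrable_const (Real.log (max β₀ β₂)))
        (hbnd.mono fun p hp => hp.2)
      simpa [chiOf, integral_const, measure_univ] using this
  -- Part (3)
  have hpart3 : μ Lam02 = 0 →
      chiOf fs μ ∈ Set.Icc (Real.log lam₀) (sSup S) := by
    intro hL0
    constructor
    · have := integral_mono_ae (integrable_const (Real.log lam₀)) hφint
        (ae_of_all _ fun p => (hfam.phi_mem p).1)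
      simpa [chiOf, integral_const, measure_univ] using this
    · refine le_of_forall_pos_le_add fun ε hε => ?_
      rw [← sub_le_iff_le_add]
      by_cases hcase : Real.log lam₀ < chiOf fs μ - ε
      · obtain ⟨p, hpE, hplyap⟩ := exists_good_point hfam μ herg hL0 hε hcase
        refine le_trans hplyap (le_csSup hSbdd ?_)
        exact ⟨(p.2 : ℝ), p.2.2, fun n => p.1 (n : ℤ), hpE, rfl⟩
      · exact le_trans (not_lt.1 hcase) hsSup_ge
  refine ⟨?_, hpart2, hpart3⟩
  rcases herg.ae_empty_or_univ measurableSet_lam02 hfam.preimage_lam02 with h' | h'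
  · exact Or.inl (hpart3 (ae_eq_empty.1 h'))
  · refine Or.inr (hpart2 ?_)
    have := measure_congr h'
    simpa using this


end
end

section
/- (Topological transitivity of the maximal invariant set.) Assume (F0), (F1), (F2) and (F01). Then G restricted to Λ_G is topologically transitive: for all nonempty relatively open subsets U, V of Λ_G there exists n∈ℕ with Gⁿ(U) ∩ V ≠ ∅. -/
open Set Filter MeasureTheory

noncomputable section

section Aux

section Core
variable {f : ℝ → ℝ} {β lam : ℝ}

structure F0pack (f : ℝ → ℝ) (β lam : ℝ) : Prop where
  contdiff : ContDiff ℝ 1 f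
  mapsto : Set.MapsTo f (Set.Icc 0 1) (Set.Icc 0 1)
  mono : StrictMonoOn f (Set.Icc 0 1)
  f0 : f 0 = 0
  f1 : f 1 = 1
  push : ∀ x ∈ Set.Ioo (0:ℝ) 1, x < f x
  d0 : deriv f 0 = β
  hβ : 1 < β
  d1 : deriv f 1 = lam
  hlam0 : 0 < lam
  hlam1 : lam < 1
  dlow : ∀ x ∈ Set.Icc (0:ℝ) 1, lam ≤ deriv f x
  danti : AntitoneOn (deriv f) (Set.Icc 0 1)

namespace F0pack
variable (H : F0pack f β lam)
include H

lemma cont : Continuous f := H.contdiff.continuous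

lemma slope_ex {p q : ℝ} (h0 : 0 ≤ p) (hpq : p < q) (h1 : q ≤ 1) :
    ∃ c ∈ Ioo p q, f q - f p = deriv f c * (q - p) := by
  obtain ⟨c, hc, hcs⟩ := exists_deriv_eq_slope f hpq (H.cont.continuousOn)
    ((H.contdiff.differentiable one_ne_zero).differentiableOn)
  refine ⟨c, hc, ?_⟩
  rw [hcs]
  exact (div_mul_cancel₀ _ (by linarith : q - p ≠ 0)).symm

omit H in lemma mem_of_Ioo {p q c : ℝ} (h0 : 0 ≤ p) (h1 : q ≤ 1) (hc : c ∈ Ioo p q) :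
    c ∈ Icc (0:ℝ) 1 := ⟨le_trans h0 hc.1.le, le_trans hc.2.le h1⟩

lemma dup {x : ℝ} (hx : x ∈ Icc (0:ℝ) 1) : deriv f x ≤ β := by
  rw [← H.d0]
  exact H.danti (by constructor <;> norm_num) hx hx.1

lemma slope_lower {p q : ℝ} (h0 : 0 ≤ p) (hpq : p < q) (h1 : q ≤ 1) :
    lam * (q - p) ≤ f q - f p := by
  obtain ⟨c, hc, hcs⟩ := H.slope_ex h0 hpq h1
  rw [hcs]
  have := H.dlow c (mem_of_Ioo h0 h1 hc)
  nlinarith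

lemma slope_upper {p q : ℝ} (h0 : 0 ≤ p) (hpq : p < q) (h1 : q ≤ 1) :
    f q - f p ≤ β * (q - p) := by
  obtain ⟨c, hc, hcs⟩ := H.slope_ex h0 hpq h1
  rw [hcs]
  have := H.dup (mem_of_Ioo h0 h1 hc)
  exact mul_le_mul_of_nonneg_right this (by linarith)

/-- slope comparison: for `p<q ≤ r<s`, slope over `[r,s]` ≤ slope over `[p,q]`. -/
lemma slope_mono {p q r s : ℝ} (h0 : 0 ≤ p) (hpq : p < q) (hqr : q ≤ r)
    (hrs : r < s) (h1 : s ≤ 1) :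
    (f s - f r) * (q - p) ≤ (f q - f p) * (s - r) := by
  obtain ⟨c₁, hc₁, e₁⟩ := H.slope_ex h0 hpq (le_trans (le_trans hqr hrs.le) h1)
  obtain ⟨c₂, hc₂, e₂⟩ := H.slope_ex (le_trans h0 (le_trans hpq.le hqr)) hrs h1
  have hcc : c₁ ≤ c₂ := le_trans hc₁.2.le (le_trans hqr hc₂.1.le)
  have hd : deriv f c₂ ≤ deriv f c₁ :=
    H.danti (mem_of_Ioo h0 (le_trans (le_trans hqr hrs.le) h1) hc₁)
      (mem_of_Ioo (le_trans h0 (le_trans hpq.le hqr)) h1 hc₂) hcc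
  rw [e₁, e₂]
  have hq : (0:ℝ) ≤ (q - p) * (s - r) := mul_nonneg (by linarith) (by linarith)
  nlinarith [mul_le_mul_of_nonneg_right hd hq]

end F0pack
end Core

section More
variable {f : ℝ → ℝ} {β lam : ℝ}
namespace F0pack
variable (H : F0pack f β lam)
include H

lemma f_lt_one {x : ℝ} (h0 : 0 ≤ x) (h1 : x < 1) : f x < 1 := by
  have := H.mono (⟨h0, h1.le⟩ : x ∈ Icc (0:ℝ) 1) (⟨zero_le_one, le_rfl⟩) h1
  rwa [H.f1] at this

lemma f_pos {x : ℝ} (h0 : 0 < x) (h1 : x ≤ 1) : 0 < f x := by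
  have := H.mono (⟨le_rfl, zero_le_one⟩ : (0:ℝ) ∈ Icc (0:ℝ) 1) (⟨h0.le, h1⟩) h0
  rwa [H.f0] at this

lemma mem_Ioo_f {x : ℝ} (hx : x ∈ Ioo (0:ℝ) 1) : f x ∈ Ioo (0:ℝ) 1 :=
  ⟨H.f_pos hx.1 hx.2.le, H.f_lt_one hx.1.le hx.2⟩

/-- `1 - f x ≥ lam * (1-x)` -/
lemma one_sub_f {x : ℝ} (h0 : 0 ≤ x) (h1 : x ≤ 1) : lam * (1 - x) ≤ 1 - f x := by
  rcases eq_or_lt_of_le h1 with h | h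
  · subst h; rw [H.f1]; simp
  · have := H.slope_lower h0 h le_rfl
    rw [H.f1] at this; linarith

/-- `f x ≤ β x` -/
lemma f_le_beta {x : ℝ} (h0 : 0 ≤ x) (h1 : x ≤ 1) : f x ≤ β * x := by
  rcases eq_or_lt_of_le h0 with h | h
  · rw [← h, H.f0]; simp
  · have := H.slope_upper le_rfl h h1
    rw [H.f0] at this; linarith

/-- `f x - x ≤ (1-lam)(1-x)` -/
lemma gap_upper {x : ℝ} (h0 : 0 ≤ x) (h1 : x ≤ 1) : f x - x ≤ (1 - lam) * (1 - x) := by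
  have := H.one_sub_f h0 h1
  nlinarith

/-- gap lower bound in the high region: for `c ≤ x < 1`,
`f x - x ≥ (1 - deriv f c)(1-x)`. -/
lemma gap_lower {c x : ℝ} (hc : 0 ≤ c) (hcx : c ≤ x) (h1 : x < 1) :
    (1 - deriv f c) * (1 - x) ≤ f x - x := by
  obtain ⟨c₂, hc₂, e₂⟩ := H.slope_ex (le_trans hc hcx) h1 le_rfl
  rw [H.f1] at e₂
  have hd : deriv f c₂ ≤ deriv f c :=
    H.danti ⟨hc, by linarith [hc₂.2.le]⟩ (mem_of_Ioo (le_trans hc hcx) le_rfl hc₂)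
      (le_trans hcx hc₂.1.le)
  nlinarith [hc₂.1, hc₂.2]

/-- ratio step: for `0 ≤ p < q < 1`, `(1 - f q)(1-p) ≤ (1 - f p)(1-q)`. -/
lemma ratio_step {p q : ℝ} (h0 : 0 ≤ p) (hpq : p < q) (h1 : q < 1) :
    (1 - f q) * (1 - p) ≤ (1 - f p) * (1 - q) := by
  have hsl := H.slope_mono h0 hpq le_rfl h1 le_rfl
  rw [H.f1] at hsl
  -- (1 - f q)(q-p) ≤ (f q - f p)(1-q)
  have h2 : 0 ≤ 1 - f q := by linarith [H.f_lt_one (le_trans h0 hpq.le) h1]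
  nlinarith

/-- `slope(a_i,1) ≤ slope(a_i, b_i)` form:
`(1 - f p)(q - p) ≤ (f q - f p)(1 - p)` for `0 ≤ p < q < 1`. -/
lemma slope_one_le {p q : ℝ} (h0 : 0 ≤ p) (hpq : p < q) (h1 : q < 1) :
    (1 - f p) * (q - p) ≤ (f q - f p) * (1 - p) := by
  have hsl := H.slope_mono h0 hpq le_rfl h1 le_rfl
  rw [H.f1] at hsl
  nlinarith

end F0pack
end More

section Dyn
variable {f : ℝ → ℝ} {β lam : ℝ}
namespace F0pack
variable (H : F0pack f β lam)
include H

lemma iter_mem {x : ℝ} (hx : x ∈ Ioo (0:ℝ) 1) (k : ℕ) : f^[k] x ∈ Ioo (0:ℝ) 1 := by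
  induction k with
  | zero => simpa using hx
  | succ n ih => rw [Function.iterate_succ_apply']; exact H.mem_Ioo_f ih

lemma iter_mono (k : ℕ) {p q : ℝ} (h0 : 0 ≤ p) (hpq : p ≤ q) (h1 : q ≤ 1) :
    f^[k] p ≤ f^[k] q ∧ f^[k] p ∈ Icc (0:ℝ) 1 ∧ f^[k] q ∈ Icc (0:ℝ) 1 := by
  induction k with
  | zero => exact ⟨by simpa using hpq, by simp [h0, le_trans hpq h1],
      by simp [le_trans h0 hpq, h1]⟩
  | succ n ih =>
    obtain ⟨hle, hp, hq⟩ := ih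
    rw [Function.iterate_succ_apply', Function.iterate_succ_apply']
    exact ⟨H.mono.monotoneOn hp hq hle, H.mapsto hp, H.mapsto hq⟩

lemma iter_strict (k : ℕ) {p q : ℝ} (h0 : 0 ≤ p) (hpq : p < q) (h1 : q ≤ 1) :
    f^[k] p < f^[k] q := by
  induction k with
  | zero => simpa using hpq
  | succ n ih =>
    obtain ⟨_, hp, hq⟩ := H.iter_mono n h0 hpq.le h1
    rw [Function.iterate_succ_apply', Function.iterate_succ_apply']
    exact H.mono hp hq ih

lemma iter_succ_gt {x : ℝ} (hx : x ∈ Ioo (0:ℝ) 1) (k : ℕ) : f^[k] x < f^[k+1] x := by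
  rw [Function.iterate_succ_apply']
  exact H.push _ (H.iter_mem hx k)

lemma iter_tendsto {x : ℝ} (hx : x ∈ Ioo (0:ℝ) 1) :
    Filter.Tendsto (fun k => f^[k] x) Filter.atTop (nhds 1) := by
  have hmono : Monotone (fun k => f^[k] x) :=
    monotone_nat_of_le_succ (fun k => (H.iter_succ_gt hx k).le)
  have hbdd : BddAbove (Set.range (fun k => f^[k] x)) :=
    ⟨1, by rintro y ⟨k, rfl⟩; exact (H.iter_mem hx k).2.le⟩
  have hL := tendsto_atTop_ciSup hmono hbdd
  set L := ⨆ k, f^[k] x with hLdef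
  have hLmem : L ∈ Icc x 1 := by
    constructor
    · exact le_ciSup hbdd 0
    · exact ciSup_le (fun k => (H.iter_mem hx k).2.le)
  have hfix : f L = L := by
    have h1 : Filter.Tendsto (fun k => f^[k+1] x) Filter.atTop (nhds L) :=
      hL.comp (Filter.tendsto_add_atTop_nat 1)
    have h2 : Filter.Tendsto (fun k => f (f^[k] x)) Filter.atTop (nhds (f L)) :=
      (H.cont.tendsto L).comp hL
    have h3 : (fun k => f^[k+1] x) = fun k => f (f^[k] x) := by
      funext k; rw [Function.iterate_succ_apply']
    rw [h3] at h1
    exact tendsto_nhds_unique h2 h1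
  have : L = 1 := by
    by_contra hne
    have hL1 : L < 1 := lt_of_le_of_ne hLmem.2 hne
    have : L < f L := H.push L ⟨lt_of_lt_of_le hx.1 hLmem.1, hL1⟩
    rw [hfix] at this; exact lt_irrefl _ this
  rwa [this] at hL

lemma exists_iter_gt {x c : ℝ} (hx : x ∈ Ioo (0:ℝ) 1) (hc : c < 1) :
    ∃ k, c < f^[k] x := by
  have := (H.iter_tendsto hx).eventually (eventually_gt_nhds hc)
  exact this.exists

lemma image_Icc {p q : ℝ} (h0 : 0 ≤ p) (hpq : p ≤ q) (h1 : q ≤ 1) :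
    f '' Icc p q = Icc (f p) (f q) := by
  apply Subset.antisymm
  · rintro _ ⟨z, hz, rfl⟩
    exact ⟨H.mono.monotoneOn ⟨h0, le_trans hpq h1⟩ ⟨le_trans h0 hz.1, le_trans hz.2 h1⟩ hz.1,
      H.mono.monotoneOn ⟨le_trans h0 hz.1, le_trans hz.2 h1⟩ ⟨le_trans h0 hpq, h1⟩ hz.2⟩
  · exact intermediate_value_Icc hpq (H.cont.continuousOn)

lemma iter_image (k : ℕ) {p q : ℝ} (h0 : 0 ≤ p) (hpq : p ≤ q) (h1 : q ≤ 1) :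
    f^[k] '' Icc p q = Icc (f^[k] p) (f^[k] q) := by
  induction k with
  | zero => simp
  | succ n ih =>
    have h := H.iter_mono n h0 hpq h1
    have : f^[n+1] = f ∘ f^[n] := by funext z; rw [Function.iterate_succ_apply']; rfl
    rw [this, image_comp, ih, H.image_Icc h.2.1.1 h.1 h.2.2.2]
    rfl

lemma iter_zero_one (k : ℕ) : f^[k] 0 = 0 ∧ f^[k] 1 = 1 := by
  induction k with
  | zero => simp
  | succ n ih =>
    rw [Function.iterate_succ_apply', Function.iterate_succ_apply', ih.1, ih.2]
    exact ⟨H.f0, H.f1⟩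

/-- chain: from `[h₁,h₂]` with `f h₁ ≤ h₂`, every `t ∈ [h₁, 1)` is captured. -/
lemma chain {h₁ h₂ t : ℝ} (hh0 : 0 < h₁) (hh : h₁ < h₂) (hh2 : h₂ < 1)
    (hf : f h₁ ≤ h₂) (ht1 : h₁ ≤ t) (ht2 : t < 1) :
    ∃ k, f^[k] h₁ ≤ t ∧ t ≤ f^[k] h₂ := by
  have hex : ∃ k, t < f^[k] h₁ := H.exists_iter_gt ⟨hh0, lt_trans hh hh2⟩ ht2
  have hk0 : Nat.find hex ≠ 0 := by
    intro h
    have h5 := Nat.find_spec hex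
    rw [h] at h5
    simp at h5
    linarith
  obtain ⟨k, hk⟩ : ∃ k, Nat.find hex = k + 1 := ⟨Nat.find hex - 1, by omega⟩
  have h1 : ¬ t < f^[k] h₁ := Nat.find_min hex (by omega)
  push_neg at h1
  refine ⟨k, h1, ?_⟩
  have h2 : t < f^[k+1] h₁ := by rw [← hk]; exact Nat.find_spec hex
  have h3 : f^[k+1] h₁ = f^[k] (f h₁) := Function.iterate_succ_apply f k h₁
  have h4 : f^[k] (f h₁) ≤ f^[k] h₂ := by
    have hfh1 : (0:ℝ) ≤ f h₁ := (H.f_pos hh0 (by linarith)).le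
    exact (H.iter_mono k hfh1 hf hh2.le).1
  rw [h3] at h2
  linarith

end F0pack
end Dyn

section Words
variable {fs : Fin 3 → ℝ → ℝ}

lemma wordComp_nil' (x : ℝ) : wordComp fs [] x = x := rfl

lemma wordComp_append' (u v : List (Fin 3)) (x : ℝ) :
    wordComp fs (u ++ v) x = wordComp fs v (wordComp fs u x) :=
  List.foldl_append

lemma wordComp_cons' (i : Fin 3) (w : List (Fin 3)) (x : ℝ) :
    wordComp fs (i :: w) x = wordComp fs w (fs i x) := rfl

lemma wordComp_replicate' {f : ℝ → ℝ} (hfs0 : fs 0 = f) (k : ℕ) (x : ℝ) :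
    wordComp fs (List.replicate k 0) x = f^[k] x := by
  induction k generalizing x with
  | zero => rfl
  | succ n ih =>
    rw [List.replicate_succ, wordComp_cons', ih, hfs0, ← Function.iterate_succ_apply]

end Words

section GImage
variable {γ : ℝ}

lemma g_image (hγ0 : 0 < γ) {p q : ℝ} (hpq : p ≤ q) :
    (fun x => γ * (1 - x)) '' Icc p q = Icc (γ * (1 - q)) (γ * (1 - p)) := by
  ext z
  constructor
  · rintro ⟨w, hw, rfl⟩
    simp only []
    constructor <;> nlinarith [hw.1, hw.2]
  · rintro ⟨hz1, hz2⟩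
    refine ⟨1 - z / γ, ⟨?_, ?_⟩, ?_⟩
    · rw [le_sub_comm, div_le_iff₀ hγ0]; nlinarith
    · rw [sub_le_comm, le_div_iff₀ hγ0]; nlinarith
    · field_simp; ring

end GImage

section Loop
variable {fs : Fin 3 → ℝ → ℝ} {f : ℝ → ℝ} {β lam γ c : ℝ}

/-- The expansion loop. -/
lemma loop (H : F0pack f β lam) (hfs0 : fs 0 = f) (hfs1 : fs 1 = fun x => γ * (1 - x))
    (hγ0 : 0 < γ) (hγ1 : γ < 1) (hc : c ∈ Ioo (0:ℝ) 1) (hdc : deriv f c < 1)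
    {x₁ x₂ : ℝ} (hcx : c ≤ x₁) (hx12 : x₁ < x₂) (hx21 : x₂ < 1) :
    ∃ (v : List (Fin 3)) (h₁ h₂ : ℝ),
      (∀ z ∈ Icc x₁ x₂, wordComp fs v z ∈ Icc h₁ h₂) ∧
      (∀ t ∈ Icc h₁ h₂, ∃ z ∈ Icc x₁ x₂, wordComp fs v z = t) ∧
      0 < h₁ ∧ h₁ < h₂ ∧ h₂ < 1 ∧
      (1 - h₂ ≤ lam * (1 - h₁) ∨
        (x₂ < h₁ ∧
          lam * (1 - deriv f c) * (x₂ - x₁) * (1 - h₁) ≤ (β - 1) * (1 - x₁) * (h₂ - h₁))) := by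
  set A0 := γ * (1 - x₂) with hA0
  set B0 := γ * (1 - x₁) with hB0
  have hA0mem : A0 ∈ Ioo (0:ℝ) 1 := by
    constructor
    · rw [hA0]
      have : 0 < 1 - x₂ := by linarith
      positivity
    · rw [hA0]
      have h1 : γ * (1 - x₂) ≤ γ * 1 := mul_le_mul_of_nonneg_left (by linarith [hc.1]) hγ0.le
      linarith
  have hB0mem : B0 ∈ Ioo (0:ℝ) 1 := by
    constructor
    · rw [hB0]
      have h0x : 0 < 1 - x₁ := by linarith
      positivity
    · rw [hB0]
      have h1 : γ * (1 - x₁) ≤ γ * 1 := mul_le_mul_of_nonneg_left (by linarith [hc.1]) hγ0.le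
      linarith
  have hAB : A0 < B0 := by rw [hA0, hB0]; nlinarith
  set a : ℕ → ℝ := fun i => f^[i] A0 with ha
  set b : ℕ → ℝ := fun i => f^[i] B0 with hb
  have haMem : ∀ i, a i ∈ Ioo (0:ℝ) 1 := fun i => H.iter_mem hA0mem i
  have hbMem : ∀ i, b i ∈ Ioo (0:ℝ) 1 := fun i => H.iter_mem hB0mem i
  have hab : ∀ i, a i < b i := fun i => H.iter_strict i hA0mem.1.le hAB hB0mem.2.le
  have hbsucc : ∀ i, b i < b (i+1) := fun i => H.iter_succ_gt hB0mem i
  have hasucc : ∀ i, a i < a (i+1) := fun i => H.iter_succ_gt hA0mem i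
  have hfb : ∀ i, b (i+1) = f (b i) := fun i => Function.iterate_succ_apply' f i B0
  have hfa : ∀ i, a (i+1) = f (a i) := fun i => Function.iterate_succ_apply' f i A0
  -- image of the word `1 :: replicate k 0`
  have himg : ∀ k : ℕ,
      (∀ z ∈ Icc x₁ x₂, wordComp fs (1 :: List.replicate k 0) z ∈ Icc (a k) (b k)) ∧
      (∀ t ∈ Icc (a k) (b k), ∃ z ∈ Icc x₁ x₂, wordComp fs (1 :: List.replicate k 0) z = t) := by
    intro k
    have heval : ∀ z, wordComp fs (1 :: List.replicate k 0) z = f^[k] (γ * (1 - z)) := by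
      intro z
      rw [wordComp_cons', wordComp_replicate' hfs0, hfs1]
    have himg2 : f^[k] '' ((fun x => γ * (1 - x)) '' Icc x₁ x₂) = Icc (a k) (b k) := by
      rw [g_image hγ0 hx12.le, H.iter_image k hA0mem.1.le hAB.le hB0mem.2.le]
    constructor
    · intro z hz
      rw [heval]
      rw [← himg2]
      exact mem_image_of_mem _ (mem_image_of_mem _ hz)
    · intro t ht
      rw [← himg2] at ht
      obtain ⟨y, ⟨z, hz, rfl⟩, hyt⟩ := ht
      exact ⟨z, hz, by rw [heval]; exact hyt⟩
  -- telescoping 1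
  have T1 : ∀ i, (b (i+1) - b i) * (b 0 - a 0) ≤ (b 1 - b 0) * (b i - a i) := by
    intro i
    induction i with
    | zero => exact le_of_eq (by ring)
    | succ n ih =>
      have hstep : (b (n+2) - b (n+1)) * (b n - a n) ≤ (b (n+1) - a (n+1)) * (b (n+1) - b n) := by
        have := H.slope_mono (haMem n).1.le (hab n) le_rfl (hbsucc n) (hbMem (n+1)).2.le
        rw [← hfa n, ← hfb n, ← hfb (n+1)] at this
        linarith
      have hcancel : (b (n+2) - b (n+1)) * (b 0 - a 0) * (b n - a n)
          ≤ (b 1 - b 0) * (b (n+1) - a (n+1)) * (b n - a n) := by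
        calc (b (n+2) - b (n+1)) * (b 0 - a 0) * (b n - a n)
            = (b (n+2) - b (n+1)) * (b n - a n) * (b 0 - a 0) := by ring
          _ ≤ (b (n+1) - a (n+1)) * (b (n+1) - b n) * (b 0 - a 0) := by
              apply mul_le_mul_of_nonneg_right hstep (by nlinarith [hab 0])
          _ = (b (n+1) - a (n+1)) * ((b (n+1) - b n) * (b 0 - a 0)) := by ring
          _ ≤ (b (n+1) - a (n+1)) * ((b 1 - b 0) * (b n - a n)) := by
              apply mul_le_mul_of_nonneg_left ih (by nlinarith [hab (n+1)])
          _ = (b 1 - b 0) * (b (n+1) - a (n+1)) * (b n - a n) := by ring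
      exact le_of_mul_le_mul_right hcancel (by nlinarith [hab n])
  -- telescoping 2
  have T2 : ∀ i₀ i, i₀ ≤ i → (1 - a i) * (b i₀ - a i₀) ≤ (1 - a i₀) * (b i - a i) := by
    intro i₀ i hle
    induction i, hle using Nat.le_induction with
    | base => exact le_of_eq (by ring)
    | succ n hn ih =>
      have hstep : (1 - a (n+1)) * (b n - a n) ≤ (1 - a n) * (b (n+1) - a (n+1)) := by
        have := H.slope_one_le (haMem n).1.le (hab n) (hbMem n).2
        rw [← hfa n, ← hfb n] at this
        linarith
      have hcancel : (1 - a (n+1)) * (b i₀ - a i₀) * (b n - a n)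
          ≤ (1 - a i₀) * (b (n+1) - a (n+1)) * (b n - a n) := by
        calc (1 - a (n+1)) * (b i₀ - a i₀) * (b n - a n)
            = (1 - a (n+1)) * (b n - a n) * (b i₀ - a i₀) := by ring
          _ ≤ (1 - a n) * (b (n+1) - a (n+1)) * (b i₀ - a i₀) := by
              apply mul_le_mul_of_nonneg_right hstep (by nlinarith [hab i₀])
          _ = (b (n+1) - a (n+1)) * ((1 - a n) * (b i₀ - a i₀)) := by ring
          _ ≤ (b (n+1) - a (n+1)) * ((1 - a i₀) * (b n - a n)) := by
              apply mul_le_mul_of_nonneg_left ih (by nlinarith [hab (n+1), (haMem (n+1)).2])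
          _ = (1 - a i₀) * (b (n+1) - a (n+1)) * (b n - a n) := by ring
      exact le_of_mul_le_mul_right hcancel (by nlinarith [hab n])
  -- j : first time b exceeds c
  have hexj : ∃ i, c < b i := H.exists_iter_gt hB0mem hc.2
  set j := Nat.find hexj with hj
  have hbj : c < b j := Nat.find_spec hexj
  by_cases hcase : 1 - b j ≤ lam * (1 - a j)
  · -- Case A : success
    obtain ⟨him1, him2⟩ := himg j
    exact ⟨1 :: List.replicate j 0, a j, b j, him1, him2, (haMem j).1, hab j, (hbMem j).2,
      Or.inl hcase⟩
  · -- Case B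
    push_neg at hcase
    have hexm : ∃ i, x₂ < a i := H.exists_iter_gt hA0mem hx21
    set m := Nat.find hexm with hm
    have ham : x₂ < a m := Nat.find_spec hexm
    have hjm : j ≤ m := by
      apply Nat.find_min' hexj
      calc c ≤ x₁ := hcx
        _ < x₂ := hx12
        _ < a m := ham
        _ < b m := hab m
    obtain ⟨him1, him2⟩ := himg m
    refine ⟨1 :: List.replicate m 0, a m, b m, him1, him2, (haMem m).1, hab m, (hbMem m).2,
      Or.inr ⟨ham, ?_⟩⟩
    -- the gain estimate
    have hgapj : (1 - deriv f c) * (1 - b j) ≤ b (j+1) - b j := by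
      have := H.gap_lower hc.1.le hbj.le (hbMem j).2
      rw [← hfb j] at this
      linarith
    have hup : b 1 - b 0 ≤ (β - 1) * B0 := by
      have h1 : f B0 ≤ β * B0 := H.f_le_beta hB0mem.1.le hB0mem.2.le
      have h2 : b 1 = f B0 := hfb 0
      have h3 : b 0 = B0 := rfl
      rw [h2, h3]; linarith
    have hT1j := T1 j
    have hT2 := T2 j m hjm
    have hb0a0 : b 0 - a 0 = γ * (x₂ - x₁) := by
      show B0 - A0 = _
      rw [hA0, hB0]; ring
    have hdc1 : 0 ≤ 1 - deriv f c := by linarith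
    have hposx : (0:ℝ) < x₂ - x₁ := by linarith
    have hpos1x : (0:ℝ) < 1 - x₁ := by linarith
    have hlj : 0 < b j - a j := by linarith [hab j]
    have hlm : 0 < b m - a m := by linarith [hab m]
    have h1aj : 0 < 1 - a j := by linarith [(haMem j).2]
    have h1am : 0 < 1 - a m := by linarith [(haMem m).2]
    -- chain of inequalities
    -- (1-dfc) * lam * (1-a j) * γ(x₂-x₁) ≤ (b (j+1) - b j) * (b 0 - a 0)
    have step1 : (1 - deriv f c) * (lam * (1 - a j)) * (γ * (x₂ - x₁))
        ≤ (b (j+1) - b j) * (b 0 - a 0) := by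
      rw [hb0a0]
      have h1 : (1 - deriv f c) * (lam * (1 - a j)) ≤ (1 - deriv f c) * (1 - b j) :=
        mul_le_mul_of_nonneg_left hcase.le hdc1
      have h2 : 0 ≤ γ * (x₂ - x₁) := by positivity
      calc (1 - deriv f c) * (lam * (1 - a j)) * (γ * (x₂ - x₁))
          ≤ (1 - deriv f c) * (1 - b j) * (γ * (x₂ - x₁)) := mul_le_mul_of_nonneg_right h1 h2
        _ ≤ (b (j+1) - b j) * (γ * (x₂ - x₁)) := mul_le_mul_of_nonneg_right hgapj h2
    have step2 : (b (j+1) - b j) * (b 0 - a 0) ≤ (β - 1) * γ * (1 - x₁) * (b j - a j) := by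
      calc (b (j+1) - b j) * (b 0 - a 0) ≤ (b 1 - b 0) * (b j - a j) := hT1j
        _ ≤ (β - 1) * B0 * (b j - a j) := by
            apply mul_le_mul_of_nonneg_right hup hlj.le
        _ = (β - 1) * γ * (1 - x₁) * (b j - a j) := by rw [hB0]; ring
    -- combine with T2
    have step3 : (1 - deriv f c) * (lam * (1 - a j)) * (γ * (x₂ - x₁)) * (1 - a m)
        ≤ (β - 1) * γ * (1 - x₁) * (1 - a j) * (b m - a m) := by
      calc (1 - deriv f c) * (lam * (1 - a j)) * (γ * (x₂ - x₁)) * (1 - a m)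
          ≤ (β - 1) * γ * (1 - x₁) * (b j - a j) * (1 - a m) := by
            apply mul_le_mul_of_nonneg_right (le_trans step1 step2) h1am.le
        _ = (β - 1) * γ * (1 - x₁) * ((1 - a m) * (b j - a j)) := by ring
        _ ≤ (β - 1) * γ * (1 - x₁) * ((1 - a j) * (b m - a m)) := by
            exact mul_le_mul_of_nonneg_left hT2
              (mul_nonneg (mul_nonneg (by linarith [H.hβ] : (0:ℝ) ≤ β - 1) hγ0.le) hpos1x.le)
        _ = (β - 1) * γ * (1 - x₁) * (1 - a j) * (b m - a m) := by ring
    have step4 : lam * (1 - deriv f c) * (x₂ - x₁) * (1 - a m) * (γ * (1 - a j))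
        ≤ (β - 1) * (1 - x₁) * (b m - a m) * (γ * (1 - a j)) := by
      calc lam * (1 - deriv f c) * (x₂ - x₁) * (1 - a m) * (γ * (1 - a j))
          = (1 - deriv f c) * (lam * (1 - a j)) * (γ * (x₂ - x₁)) * (1 - a m) := by ring
        _ ≤ (β - 1) * γ * (1 - x₁) * (1 - a j) * (b m - a m) := step3
        _ = (β - 1) * (1 - x₁) * (b m - a m) * (γ * (1 - a j)) := by ring
    exact le_of_mul_le_mul_right step4 (mul_pos hγ0 h1aj)

end Loop

section Grow
variable {fs : Fin 3 → ℝ → ℝ} {f : ℝ → ℝ} {β lam γ c : ℝ}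

lemma grow (H : F0pack f β lam) (hfs0 : fs 0 = f) (hfs1 : fs 1 = fun x => γ * (1 - x))
    (hγ0 : 0 < γ) (hγ1 : γ < 1) (hc : c ∈ Ioo (0:ℝ) 1) (hdc : deriv f c < 1)
    (hΓ : β - 1 < lam * (1 - deriv f c)) :
    ∀ n : ℕ, ∀ x₁ x₂ : ℝ, c ≤ x₁ → x₁ < x₂ → x₂ < 1 →
    (1 - lam) * (1 - x₁) * (β - 1)^n < (x₂ - x₁) * (lam * (1 - deriv f c))^n →
    ∃ (v : List (Fin 3)) (h₁ h₂ : ℝ),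
      (∀ z ∈ Icc x₁ x₂, wordComp fs v z ∈ Icc h₁ h₂) ∧
      (∀ t ∈ Icc h₁ h₂, ∃ z ∈ Icc x₁ x₂, wordComp fs v z = t) ∧
      0 < h₁ ∧ h₁ < h₂ ∧ h₂ < 1 ∧ 1 - h₂ ≤ lam * (1 - h₁) := by
  have hβ1 : (0:ℝ) < β - 1 := by linarith [H.hβ]
  have hL : 0 < lam * (1 - deriv f c) := lt_trans hβ1 hΓ
  intro n
  induction n with
  | zero =>
    intro x₁ x₂ hcx h12 h21 hkey
    simp only [pow_zero, mul_one] at hkey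
    refine ⟨[], x₁, x₂, ?_, ?_, by linarith [hc.1], h12, h21, by nlinarith⟩
    · intro z hz; simpa [wordComp_nil'] using hz
    · intro t ht; exact ⟨t, ht, rfl⟩
  | succ n ih =>
    intro x₁ x₂ hcx h12 h21 hkey
    by_cases hdir : (1 - lam) * (1 - x₁) < x₂ - x₁
    · refine ⟨[], x₁, x₂, ?_, ?_, by linarith [hc.1], h12, h21, by nlinarith⟩
      · intro z hz; simpa [wordComp_nil'] using hz
      · intro t ht; exact ⟨t, ht, rfl⟩
    · push_neg at hdir
      obtain ⟨v, h₁, h₂, hmap, hsurj, hh0, hh12, hh21, hor⟩ :=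
        loop H hfs0 hfs1 hγ0 hγ1 hc hdc hcx h12 h21
      rcases hor with hsucc | ⟨hgt, hgain⟩
      · exact ⟨v, h₁, h₂, hmap, hsurj, hh0, hh12, hh21, hsucc⟩
      · have hch : c ≤ h₁ := by linarith
        have hkey' : (1 - lam) * (1 - h₁) * (β - 1)^n
            < (h₂ - h₁) * (lam * (1 - deriv f c))^n := by
          set L := lam * (1 - deriv f c) with hLdef
          have h1h : (0:ℝ) < 1 - h₁ := by linarith
          have hstep : (1 - lam) * (1 - x₁) * (β - 1)^(n+1) * (1 - h₁)
              < (x₂ - x₁) * L^(n+1) * (1 - h₁) :=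
            mul_lt_mul_of_pos_right hkey h1h
          have heq1 : (x₂ - x₁) * L^(n+1) * (1 - h₁)
              = L^n * (L * (x₂ - x₁) * (1 - h₁)) := by ring
          have heq2 : L * (x₂ - x₁) * (1 - h₁) = lam * (1 - deriv f c) * (x₂ - x₁) * (1 - h₁) := by
            rw [hLdef]
          have hcomb : (x₂ - x₁) * L^(n+1) * (1 - h₁)
              ≤ L^n * ((β - 1) * (1 - x₁) * (h₂ - h₁)) := by
            rw [heq1]
            apply mul_le_mul_of_nonneg_left _ (pow_nonneg hL.le n)
            rw [heq2]; exact hgain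
          have hfin : (1 - lam) * (1 - x₁) * (β - 1)^(n+1) * (1 - h₁)
              < L^n * ((β - 1) * (1 - x₁) * (h₂ - h₁)) := lt_of_lt_of_le hstep hcomb
          have hx1 : (0:ℝ) < 1 - x₁ := by linarith
          have hcancel : (1 - lam) * (1 - h₁) * (β - 1)^n * ((β - 1) * (1 - x₁))
              < (h₂ - h₁) * L^n * ((β - 1) * (1 - x₁)) := by
            calc (1 - lam) * (1 - h₁) * (β - 1)^n * ((β - 1) * (1 - x₁))
                = (1 - lam) * (1 - x₁) * (β - 1)^(n+1) * (1 - h₁) := by ring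
              _ < L^n * ((β - 1) * (1 - x₁) * (h₂ - h₁)) := hfin
              _ = (h₂ - h₁) * L^n * ((β - 1) * (1 - x₁)) := by ring
          exact lt_of_mul_lt_mul_right hcancel (by positivity)
        obtain ⟨v', H₁, H₂, hmap', hsurj', hH0, hH12, hH21, hsucc'⟩ :=
          ih h₁ h₂ hch hh12 hh21 hkey'
        refine ⟨v ++ v', H₁, H₂, ?_, ?_, hH0, hH12, hH21, hsucc'⟩
        · intro z hz
          rw [wordComp_append']
          exact hmap' _ (hmap z hz)
        · intro t ht
          obtain ⟨y, hy, hyt⟩ := hsurj' t ht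
          obtain ⟨z, hz, hzy⟩ := hsurj y hy
          exact ⟨z, hz, by rw [wordComp_append', hzy, hyt]⟩

end Grow

section Reach
variable {fs : Fin 3 → ℝ → ℝ} {f : ℝ → ℝ} {β lam γ : ℝ}

/-- From a "success interval" we can reach any target in `[0,1]` within `ρ`. -/
lemma reach (H : F0pack f β lam) (hfs0 : fs 0 = f) (hfs1 : fs 1 = fun x => γ * (1 - x))
    (hγ0 : 0 < γ) (hγ1 : γ < 1) (hβlam : β * lam < 1)
    {h₁ h₂ t ρ : ℝ} (hh0 : 0 < h₁) (hh12 : h₁ < h₂) (hh21 : h₂ < 1)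
    (hsucc : 1 - h₂ ≤ lam * (1 - h₁)) (ht0 : 0 ≤ t) (ht1 : t ≤ 1) (hρ : 0 < ρ) :
    ∃ (w : List (Fin 3)) (s : ℝ), s ∈ Icc h₁ h₂ ∧ |wordComp fs w s - t| < ρ := by
  have hfh : f h₁ ≤ h₂ := by
    have := H.gap_upper hh0.le (by linarith : h₁ ≤ 1)
    nlinarith
  have hβr : β * (1 - h₂) ≤ 1 - h₁ := by nlinarith [H.hβ, H.hlam0]
  -- exact reach for t' ∈ [h₁, 1)
  have hhigh : ∀ t', h₁ ≤ t' → t' < 1 → ∃ (w : List (Fin 3)) (s : ℝ),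
      s ∈ Icc h₁ h₂ ∧ wordComp fs w s = t' := by
    intro t' ht1' ht2'
    obtain ⟨k, hk1, hk2⟩ := H.chain hh0 hh12 hh21 hfh ht1' ht2'
    have himg := H.iter_image k hh0.le hh12.le hh21.le
    have : t' ∈ f^[k] '' Icc h₁ h₂ := by rw [himg]; exact ⟨hk1, hk2⟩
    obtain ⟨s, hs, hst⟩ := this
    exact ⟨List.replicate k 0, s, hs, by rw [wordComp_replicate' hfs0]; exact hst⟩
  -- exact reach for t' ∈ (0, h₁)
  have hlow : ∀ t', 0 < t' → t' < h₁ → ∃ (w : List (Fin 3)) (s : ℝ),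
      s ∈ Icc h₁ h₂ ∧ wordComp fs w s = t' := by
    intro t' ht0' ht1'
    -- ratio stays ≥ β along the orbit
    have hratio : ∀ k, β * (1 - f^[k] h₂) ≤ 1 - f^[k] h₁ := by
      intro k
      induction k with
      | zero => simpa using hβr
      | succ n ihn =>
        have hp := H.iter_mem ⟨hh0, lt_trans hh12 hh21⟩ n
        have hq := H.iter_mem ⟨lt_trans hh0 hh12, hh21⟩ n
        have hpq : f^[n] h₁ < f^[n] h₂ := H.iter_strict n hh0.le hh12 hh21.le
        have hrs := H.ratio_step hp.1.le hpq hq.2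
        rw [← Function.iterate_succ_apply' f n h₁, ← Function.iterate_succ_apply' f n h₂] at hrs
        -- (1 - f^[n+1] h₂) (1 - f^[n] h₁) ≤ (1 - f^[n+1] h₁)(1 - f^[n] h₂)
        have hq1 : 0 < 1 - f^[n] h₂ := by linarith [hq.2]
        have h2' : β * (1 - f^[n+1] h₂) * (1 - f^[n] h₂) ≤ (1 - f^[n+1] h₁) * (1 - f^[n] h₂) := by
          calc β * (1 - f^[n+1] h₂) * (1 - f^[n] h₂)
              ≤ (1 - f^[n+1] h₂) * (β * (1 - f^[n] h₂)) := by ring_nf; exact le_rfl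
            _ ≤ (1 - f^[n+1] h₂) * (1 - f^[n] h₁) := by
                apply mul_le_mul_of_nonneg_left ihn
                  (by linarith [(H.iter_mem ⟨lt_trans hh0 hh12, hh21⟩ (n+1)).2] :
                    (0:ℝ) ≤ 1 - f^[n+1] h₂)
            _ ≤ (1 - f^[n+1] h₁) * (1 - f^[n] h₂) := hrs
        exact le_of_mul_le_mul_right h2' hq1
    -- choose k with γ (1 - f^[k] h₂) ≤ t'
    have hτ : 1 - t'/γ < 1 := by
      have : 0 < t'/γ := div_pos ht0' hγ0
      linarith
    obtain ⟨k, hk⟩ := H.exists_iter_gt (⟨lt_trans hh0 hh12, hh21⟩ : h₂ ∈ Ioo (0:ℝ) 1) hτ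
    set p := f^[k] h₁ with hp
    set q := f^[k] h₂ with hq
    have hpmem : p ∈ Ioo (0:ℝ) 1 := H.iter_mem ⟨hh0, lt_trans hh12 hh21⟩ k
    have hqmem : q ∈ Ioo (0:ℝ) 1 := H.iter_mem ⟨lt_trans hh0 hh12, hh21⟩ k
    have hpq : p < q := H.iter_strict k hh0.le hh12 hh21.le
    have hrk : β * (1 - q) ≤ 1 - p := hratio k
    set A := γ * (1 - q) with hA
    set B := γ * (1 - p) with hB
    have hApos : 0 < A := by
      rw [hA]
      have h0q : 0 < 1 - q := by linarith [hqmem.2]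
      positivity
    have hABlt : A < B := by rw [hA, hB]; nlinarith [hqmem.2, hpmem.1]
    have hB1 : B < 1 := by
      rw [hB]
      have h1 : γ * (1 - p) ≤ γ * 1 := mul_le_mul_of_nonneg_left (by linarith [hpmem.1]) hγ0.le
      linarith
    have hAt : A ≤ t' := by
      rw [hA]
      have h2 : 1 - t'/γ < q := hk
      have h3 : γ * (1 - q) < γ * (t'/γ) := by
        apply mul_lt_mul_of_pos_left _ hγ0
        linarith
      rw [mul_div_cancel₀ _ (ne_of_gt hγ0)] at h3
      linarith
    have hfA : f A ≤ B := by
      have h1 : f A ≤ β * A := H.f_le_beta hApos.le (by linarith)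
      have h2 : β * A ≤ B := by
        rw [hA, hB]
        calc β * (γ * (1 - q)) = γ * (β * (1 - q)) := by ring
          _ ≤ γ * (1 - p) := mul_le_mul_of_nonneg_left hrk hγ0.le
      linarith
    obtain ⟨k₂, hk₂1, hk₂2⟩ := H.chain hApos hABlt hB1 hfA hAt (by linarith : t' < 1)
    -- t' ∈ f^[k₂] '' Icc A B
    have himg2 := H.iter_image k₂ hApos.le hABlt.le hB1.le
    have ht'mem : t' ∈ f^[k₂] '' Icc A B := by rw [himg2]; exact ⟨hk₂1, hk₂2⟩
    obtain ⟨y, hy, hyt⟩ := ht'mem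
    -- y ∈ Icc A B = g '' Icc p q
    have hgimg : (fun x => γ * (1 - x)) '' Icc p q = Icc A B := g_image hγ0 hpq.le
    have hymem : y ∈ (fun x => γ * (1 - x)) '' Icc p q := by rw [hgimg]; exact hy
    obtain ⟨z, hz, hzy⟩ := hymem
    -- z ∈ Icc p q = f^[k] '' Icc h₁ h₂
    have himg3 := H.iter_image k hh0.le hh12.le hh21.le
    have hzmem : z ∈ f^[k] '' Icc h₁ h₂ := by rw [himg3]; exact hz
    obtain ⟨s, hs, hsz⟩ := hzmem
    refine ⟨List.replicate k 0 ++ 1 :: List.replicate k₂ 0, s, hs, ?_⟩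
    have hzy' : γ * (1 - z) = y := hzy
    rw [wordComp_append', wordComp_replicate' hfs0, hsz, wordComp_cons',
      wordComp_replicate' hfs0, hfs1]
    show f^[k₂] (γ * (1 - z)) = t'
    rw [hzy', hyt]
  -- now the cases
  by_cases hth : h₁ ≤ t
  · by_cases ht1' : t < 1
    · obtain ⟨w, s, hs, hws⟩ := hhigh t hth ht1'
      exact ⟨w, s, hs, by rw [hws]; simpa using hρ⟩
    · push_neg at ht1'
      have ht1'' : t = 1 := le_antisymm ht1 ht1'
      set t' := max h₁ (1 - ρ/2) with ht'
      have h1 : h₁ ≤ t' := le_max_left _ _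
      have h2 : t' < 1 := by
        rw [ht']
        apply max_lt (by linarith) (by linarith)
      obtain ⟨w, s, hs, hws⟩ := hhigh t' h1 h2
      refine ⟨w, s, hs, ?_⟩
      rw [hws, ht1'']
      rw [abs_lt]
      constructor
      · have := le_max_right h₁ (1 - ρ/2)
        linarith
      · linarith
  · push_neg at hth
    by_cases ht0' : 0 < t
    · obtain ⟨w, s, hs, hws⟩ := hlow t ht0' hth
      exact ⟨w, s, hs, by rw [hws]; simpa using hρ⟩
    · push_neg at ht0'
      have ht0'' : t = 0 := le_antisymm ht0' ht0
      set t' := min (ρ/2) (h₁/2) with ht'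
      have h1 : 0 < t' := lt_min (by linarith) (by linarith)
      have h2 : t' < h₁ := lt_of_le_of_lt (min_le_right _ _) (by linarith)
      obtain ⟨w, s, hs, hws⟩ := hlow t' h1 h2
      refine ⟨w, s, hs, ?_⟩
      rw [hws, ht0'']
      rw [abs_lt]
      constructor
      · linarith
      · have := min_le_left (ρ/2) (h₁/2)
        linarith

end Reach

section Numeric
variable {f : ℝ → ℝ} {β lam γ : ℝ}

lemma numeric (H : F0pack f β lam) (hγ0 : 0 < γ) (hγ1 : γ < 1)
    (hF01 : 1 < γ * (lam^3 * (1 - lam) / (1 - β⁻¹))) :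
    β - 1 < γ * β * lam^3 * (1 - lam) ∧ γ * β * lam^2 < 1 ∧ β * lam < 1 := by
  have hβ := H.hβ
  have hlam0 := H.hlam0
  have hlam1 := H.hlam1
  have hβ0 : (0:ℝ) < β := by linarith
  have hbi : 1 - β⁻¹ = (β - 1)/β := by
    rw [inv_eq_one_div]; field_simp
  have hbipos : 0 < 1 - β⁻¹ := by
    rw [hbi]; exact div_pos (by linarith) hβ0
  have hXne : (1 - β⁻¹) ≠ 0 := ne_of_gt hbipos
  have h1 : (1 - β⁻¹) < γ * (lam^3 * (1-lam)) := by
    have h2 : (1 - β⁻¹) * 1 < (1 - β⁻¹) * (γ * (lam^3 * (1 - lam) / (1 - β⁻¹))) :=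
      mul_lt_mul_of_pos_left hF01 hbipos
    rw [mul_one] at h2
    have h3 : (1 - β⁻¹) * (γ * (lam^3 * (1 - lam) / (1 - β⁻¹)))
        = γ * (lam^3 * (1-lam)) * ((1 - β⁻¹)/(1 - β⁻¹)) := by ring
    rw [h3, div_self hXne, mul_one] at h2
    exact h2
  have hi : β - 1 < γ * β * lam^3 * (1 - lam) := by
    have h4 : (1 - β⁻¹) * β < γ * (lam^3 * (1-lam)) * β := mul_lt_mul_of_pos_right h1 hβ0
    have h3 : (1 - β⁻¹) * β = β - 1 := by rw [hbi]; field_simp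
    rw [h3] at h4
    calc β - 1 < γ * (lam^3 * (1-lam)) * β := h4
      _ = γ * β * lam^3 * (1 - lam) := by ring
  have e1 : (0:ℝ) < 1 - lam := by linarith
  have e2 : lam^3 < 1 := pow_lt_one₀ hlam0.le hlam1 (by norm_num)
  have hfact : (0:ℝ) < (1 - lam) * (1 + lam - lam^3) :=
    mul_pos e1 (by linarith : (0:ℝ) < 1 + lam - lam^3)
  have h5 : lam^2 + lam^3 - lam^4 < 1 := by nlinarith [hfact]
  have hpoly : γ * (lam^2 + lam^3 - lam^4) < 1 := by
    have h6 : (0:ℝ) < lam^2 + lam^3 - lam^4 := by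
      have e3 : lam^2 < 1 := pow_lt_one₀ hlam0.le hlam1 (by norm_num)
      have := mul_pos (pow_pos hlam0 2) (show (0:ℝ) < 1 + lam - lam^2 by linarith)
      nlinarith [this]
    nlinarith [h5, h6]
  have hk1 : γ * lam^2 ≤ 1 - γ * lam^3 * (1 - lam) := by nlinarith [hpoly]
  have hb1k : β * (1 - γ * lam^3 * (1 - lam)) < 1 := by nlinarith [hi]
  have hii : γ * β * lam^2 < 1 := by
    have h7 : β * (γ * lam^2) ≤ β * (1 - γ * lam^3 * (1 - lam)) :=
      mul_le_mul_of_nonneg_left hk1 hβ0.le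
    calc γ * β * lam^2 = β * (γ * lam^2) := by ring
      _ ≤ β * (1 - γ * lam^3 * (1 - lam)) := h7
      _ < 1 := hb1k
  have hiii : β * lam < 1 := by
    have h8 : γ * lam^3 ≤ 1 := by nlinarith [pow_pos hlam0 3, e2]
    have h9 : lam ≤ 1 - γ * lam^3 * (1 - lam) := by nlinarith
    have h10 : β * lam ≤ β * (1 - γ * lam^3 * (1 - lam)) :=
      mul_le_mul_of_nonneg_left h9 hβ0.le
    linarith
  exact ⟨hi, hii, hiii⟩

lemma choose_c (H : F0pack f β lam) (hγ0 : 0 < γ) (hγ1 : γ < 1)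
    (hii : γ * β * lam^2 < 1) :
    ∃ c ∈ Ioo (0:ℝ) 1, deriv f c < 1 - γ * β * lam^2 * (1 - lam) := by
  have hβ := H.hβ
  have hlam0 := H.hlam0
  have hlam1 := H.hlam1
  set d := γ * β * lam^2 * (1 - lam) with hd
  have hdlam : lam < 1 - d := by
    have : d < 1 - lam := by
      rw [hd]
      nlinarith
    linarith
  have hcont : ContinuousAt (deriv f) 1 := (H.contdiff.continuous_deriv le_rfl).continuousAt
  have hlim : deriv f 1 = lam := H.d1
  have : ∀ᶠ x in nhds (1:ℝ), deriv f x < 1 - d := by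
    apply hcont.eventually_lt continuousAt_const
    rw [hlim]; exact hdlam
  obtain ⟨ε, hε, hball⟩ := Metric.eventually_nhds_iff.1 this
  set c := max (1/2) (1 - ε/2) with hc
  have hc1 : c < 1 := by
    rw [hc]; apply max_lt (by norm_num) (by linarith)
  have hc0 : 0 < c := lt_of_lt_of_le (by norm_num) (le_max_left _ _)
  refine ⟨c, ⟨hc0, hc1⟩, ?_⟩
  apply hball
  rw [Real.dist_eq, abs_lt]
  constructor
  · have := le_max_right (1/2:ℝ) (1 - ε/2)
    linarith
  · linarith

end Numeric

section CoreMain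
variable {fs : Fin 3 → ℝ → ℝ} {f : ℝ → ℝ} {β lam γ : ℝ}

/-- Main density result : from any nondegenerate interval we can reach any
target in `[0,1]` to arbitrary precision by words in letters `{0,1}`. -/
theorem core_reach (H : F0pack f β lam) (hfs0 : fs 0 = f)
    (hfs1 : fs 1 = fun x => γ * (1 - x)) (hγ0 : 0 < γ) (hγ1 : γ < 1)
    (hF01 : 1 < γ * (lam^3 * (1 - lam) / (1 - β⁻¹)))
    {a b t ρ : ℝ} (ha : 0 ≤ a) (hab : a < b) (hb : b ≤ 1)
    (ht0 : 0 ≤ t) (ht1 : t ≤ 1) (hρ : 0 < ρ) :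
    ∃ (w : List (Fin 3)) (s : ℝ), s ∈ Icc a b ∧ |wordComp fs w s - t| < ρ := by
  obtain ⟨hi, hii, hiii⟩ := numeric H hγ0 hγ1 hF01
  obtain ⟨c, hc, hdc⟩ := choose_c H hγ0 hγ1 hii
  have hβ := H.hβ
  have hlam0 := H.hlam0
  have hlam1 := H.hlam1
  have hdc1 : deriv f c < 1 := by nlinarith
  have hΓ : β - 1 < lam * (1 - deriv f c) := by nlinarith
  -- initial interval
  set p := max a (b/2) with hp
  set q := (p + b)/2 with hq
  have hp0 : 0 < p := lt_of_lt_of_le (by linarith : (0:ℝ) < b/2) (le_max_right _ _)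
  have hpb : p < b := max_lt hab (by linarith)
  have hpq : p < q := by rw [hq]; linarith
  have hqb : q < b := by rw [hq]; linarith
  have hq1 : q < 1 := lt_of_lt_of_le hqb hb
  have hpa : a ≤ p := le_max_left _ _
  -- climb into [c, 1)
  obtain ⟨k₀, hk₀⟩ := H.exists_iter_gt (⟨hp0, lt_of_lt_of_le hpb hb⟩ : p ∈ Ioo (0:ℝ) 1) hc.2
  set x₁ := f^[k₀] p with hx₁
  set x₂ := f^[k₀] q with hx₂
  have hx₁c : c ≤ x₁ := hk₀.le
  have hx12 : x₁ < x₂ := H.iter_strict k₀ hp0.le hpq hq1.le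
  have hx₂1 : x₂ < 1 := (H.iter_mem ⟨lt_trans hp0 hpq, hq1⟩ k₀).2
  -- choose n
  set L := lam * (1 - deriv f c) with hL
  have hLpos : 0 < L := by rw [hL]; nlinarith
  have hβ1pos : (0:ℝ) < β - 1 := by linarith
  have hrat : 1 < L / (β - 1) := by
    rw [lt_div_iff₀ hβ1pos]; linarith
  have hθpos : 0 < x₂ - x₁ := by linarith
  obtain ⟨n, hn⟩ := pow_unbounded_of_one_lt ((1 - lam) * (1 - x₁) / (x₂ - x₁)) hrat
  have hkey : (1 - lam) * (1 - x₁) * (β - 1)^n < (x₂ - x₁) * L^n := by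
    have h8 : ((1 - lam) * (1 - x₁) / (x₂ - x₁)) * ((x₂ - x₁) * (β-1)^n)
        < (L / (β - 1))^n * ((x₂ - x₁) * (β-1)^n) := by
      apply mul_lt_mul_of_pos_right hn
      positivity
    calc (1 - lam) * (1 - x₁) * (β - 1)^n
        = ((1 - lam) * (1 - x₁) / (x₂ - x₁)) * ((x₂ - x₁) * (β-1)^n) := by
          field_simp
      _ < (L / (β - 1))^n * ((x₂ - x₁) * (β-1)^n) := h8
      _ = (x₂ - x₁) * L^n := by
          rw [div_pow]
          field_simp
  obtain ⟨v, h₁, h₂, hmap, hsurj, hh0, hh12, hh21, hsucc⟩ :=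
    grow H hfs0 hfs1 hγ0 hγ1 hc hdc1 hΓ n x₁ x₂ hx₁c hx12 hx₂1 hkey
  obtain ⟨w₁, s₁, hs₁, hws₁⟩ :=
    reach H hfs0 hfs1 hγ0 hγ1 hiii hh0 hh12 hh21 hsucc ht0 ht1 hρ
  -- pull back s₁
  obtain ⟨z, hz, hzs⟩ := hsurj s₁ hs₁
  have himg0 := H.iter_image k₀ hp0.le hpq.le hq1.le
  have hzmem : z ∈ f^[k₀] '' Icc p q := by rw [himg0]; exact hz
  obtain ⟨s, hs, hsz⟩ := hzmem
  refine ⟨List.replicate k₀ 0 ++ v ++ w₁, s, ⟨le_trans hpa hs.1, le_trans hs.2 hqb.le⟩, ?_⟩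
  rw [wordComp_append', wordComp_append', wordComp_replicate' hfs0, hsz, hzs]
  exact hws₁

end CoreMain

def fwdWord (ζ : Sig3) (n : ℕ) : List (Fin 3) := List.ofFn (fun k : Fin n => ζ (k : ℕ))

def pastWord (ξ : Sig3) (n : ℕ) : List (Fin 3) :=
  List.ofFn (fun k : Fin n => ξ ((k : ℕ) - (n : ℤ)))

section SkewLemmas
variable {fs : Fin 3 → ℝ → ℝ}

lemma wordComp_concat (w : List (Fin 3)) (i : Fin 3) (x : ℝ) :
    wordComp fs (w ++ [i]) x = fs i (wordComp fs w x) := by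
  rw [wordComp_append', wordComp_cons', wordComp_nil']

lemma fwdWord_succ (ζ : Sig3) (n : ℕ) :
    fwdWord ζ (n+1) = fwdWord ζ n ++ [ζ (n : ℕ)] := by
  unfold fwdWord
  rw [List.ofFn_succ']
  simp [Fin.coe_castSucc, Fin.val_last, List.concat_eq_append]

variable (hM : ∀ i, Set.MapsTo (fs i) (Icc 0 1) (Icc 0 1))
include hM

lemma wordComp_mapsTo (w : List (Fin 3)) {x : ℝ} (hx : x ∈ Icc (0:ℝ) 1) :
    wordComp fs w x ∈ Icc (0:ℝ) 1 := by
  induction w generalizing x with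
  | nil => exact hx
  | cons i u ih => rw [wordComp_cons']; exact ih (hM i hx)

lemma Gmap_iter (n : ℕ) (ζ : Sig3) (z : Set.Icc (0:ℝ) 1) :
    (Gmap fs)^[n] (ζ, z)
      = (fun i => ζ (i + n), Set.projIcc 0 1 (by norm_num) (wordComp fs (fwdWord ζ n) z.1)) := by
  induction n with
  | zero =>
    simp only [Function.iterate_zero, id_eq]
    refine Prod.ext ?_ ?_
    · funext i
      show ζ i = ζ (i + (0:ℕ))
      congr 1
      omega
    · show z = _
      rw [show fwdWord ζ 0 = [] from rfl, wordComp_nil', Set.projIcc_val]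
  | succ n ih =>
    rw [Function.iterate_succ_apply', ih]
    unfold Gmap shiftMap
    refine Prod.ext ?_ ?_
    · funext i
      show ζ (i + 1 + n) = ζ (i + ((n:ℕ)+1:ℕ))
      congr 1
      push_cast
      ring
    · have hw : wordComp fs (fwdWord ζ n) z.1 ∈ Icc (0:ℝ) 1 := wordComp_mapsTo hM _ z.2
      rw [Set.projIcc_of_mem _ hw]
      simp only []
      rw [fwdWord_succ, wordComp_concat, show (0:ℤ) + (n:ℤ) = (n:ℤ) by ring]

lemma mem_LamG_iff {p : XSp} :
    p ∈ LamG fs ↔ ∀ n : ℕ, ∃ y ∈ Icc (0:ℝ) 1, wordComp fs (pastWord p.1 n) y = p.2.1 := by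
  constructor
  · intro hp n
    have h1 : p ∈ (Gmap fs)^[n] '' Set.univ := by
      have := Set.mem_iInter.1 hp n
      exact this
    obtain ⟨⟨ζ, z⟩, -, heq⟩ := h1
    rw [Gmap_iter hM] at heq
    have h1' : (fun i => ζ (i + n)) = p.1 := congrArg Prod.fst heq
    have hword : fwdWord ζ n = pastWord p.1 n := by
      unfold fwdWord pastWord
      congr 1
      funext k
      have := congrFun h1' ((k:ℕ) - (n:ℤ))
      rw [← this]
      congr 1
      omega
    have h2' : (Set.projIcc 0 1 (by norm_num) (wordComp fs (fwdWord ζ n) z.1)) = p.2 :=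
      congrArg Prod.snd heq
    have hw : wordComp fs (fwdWord ζ n) z.1 ∈ Icc (0:ℝ) 1 := wordComp_mapsTo hM _ z.2
    rw [Set.projIcc_of_mem _ hw] at h2'
    refine ⟨z.1, z.2, ?_⟩
    rw [← hword]
    rw [← h2']
  · intro h
    apply Set.mem_iInter.2
    intro n
    obtain ⟨y, hy, hyw⟩ := h n
    refine ⟨((fun i => p.1 (i - n)), ⟨y, hy⟩), Set.mem_univ _, ?_⟩
    rw [Gmap_iter hM]
    have hword : fwdWord (fun i => p.1 (i - n)) n = pastWord p.1 n := by
      unfold fwdWord pastWord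
      congr 1
    have hsnd : wordComp fs (fwdWord (fun i => p.1 (i - n)) n) y = p.2.1 := by
      rw [hword]; exact hyw
    refine Prod.ext ?_ ?_
    · funext i
      show p.1 (i + n - n) = p.1 i
      rw [show i + (n:ℤ) - (n:ℤ) = i by ring]
    · rw [hsnd, Set.projIcc_of_mem _ p.2.2]

omit hM in
lemma LamG_antitone {i j : ℕ} (hij : i ≤ j) :
    (Gmap fs)^[j] '' Set.univ ⊆ (Gmap fs)^[i] '' Set.univ := by
  obtain ⟨d, rfl⟩ := Nat.exists_eq_add_of_le hij
  rw [Function.iterate_add]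
  rw [Set.image_comp]
  exact Set.image_mono (Set.subset_univ _)

omit hM in
lemma LamG_fwd {p : XSp} (hp : p ∈ LamG fs) (n : ℕ) : (Gmap fs)^[n] p ∈ LamG fs := by
  apply Set.mem_iInter.2
  intro k
  have h1 : p ∈ (Gmap fs)^[k] '' Set.univ := Set.mem_iInter.1 hp k
  obtain ⟨q, -, rfl⟩ := h1
  have : (Gmap fs)^[n] ((Gmap fs)^[k] q) = (Gmap fs)^[n+k] q := by
    rw [Function.iterate_add_apply]
  rw [this]
  exact LamG_antitone (Nat.le_add_left k n) ⟨q, Set.mem_univ _, rfl⟩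

end SkewLemmas

-- past word splitting
lemma pastWord_append (ξ : Sig3) (m r : ℕ) :
    pastWord ξ (r + m) = pastWord (fun i => ξ (i - m)) r ++ pastWord ξ m := by
  apply List.ext_getElem
  · unfold pastWord; simp
  · intro k h1 h2
    rcases lt_or_ge k r with hk | hk
    · rw [List.getElem_append_left (by simp [pastWord]; omega)]
      simp only [pastWord, List.getElem_ofFn]
      congr 1
      push_cast
      omega
    · rw [List.getElem_append_right (by simp [pastWord]; omega)]
      simp only [pastWord, List.getElem_ofFn, List.length_ofFn]
      congr 1
      push_cast [Nat.cast_sub hk]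
      omega

section WordImage
variable {fs : Fin 3 → ℝ → ℝ}
variable (hM : ∀ i, Set.MapsTo (fs i) (Icc 0 1) (Icc 0 1))
variable (hC : ∀ i, Continuous (fs i))
variable (hMono : ∀ i, StrictMonoOn (fs i) (Icc (0:ℝ) 1) ∨ StrictAntiOn (fs i) (Icc (0:ℝ) 1))

omit hM hC hMono in
lemma wordComp_continuous (hC : ∀ i, Continuous (fs i)) (w : List (Fin 3)) :
    Continuous (wordComp fs w) := by
  induction w with
  | nil => exact continuous_id
  | cons i u ih =>
    have : wordComp fs (i :: u) = (wordComp fs u) ∘ (fs i) := by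
      funext x; rw [wordComp_cons']; rfl
    rw [this]
    exact ih.comp (hC i)

include hM hC hMono

lemma letter_image (i : Fin 3) {p q : ℝ} (h0 : 0 ≤ p) (hpq : p < q) (h1 : q ≤ 1) :
    ∃ P Q : ℝ, 0 ≤ P ∧ P < Q ∧ Q ≤ 1 ∧ fs i '' Icc p q = Icc P Q := by
  have hp : p ∈ Icc (0:ℝ) 1 := ⟨h0, le_trans hpq.le h1⟩
  have hq : q ∈ Icc (0:ℝ) 1 := ⟨le_trans h0 hpq.le, h1⟩
  rcases hMono i with hm | ha
  · refine ⟨fs i p, fs i q, (hM i hp).1, hm hp hq hpq, (hM i hq).2, ?_⟩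
    apply Subset.antisymm
    · rintro _ ⟨z, hz, rfl⟩
      have hzm : z ∈ Icc (0:ℝ) 1 := ⟨le_trans h0 hz.1, le_trans hz.2 h1⟩
      exact ⟨hm.monotoneOn hp hzm hz.1, hm.monotoneOn hzm hq hz.2⟩
    · exact intermediate_value_Icc hpq.le ((hC i).continuousOn)
  · refine ⟨fs i q, fs i p, (hM i hq).1, ha hp hq hpq, (hM i hp).2, ?_⟩
    apply Subset.antisymm
    · rintro _ ⟨z, hz, rfl⟩
      have hzm : z ∈ Icc (0:ℝ) 1 := ⟨le_trans h0 hz.1, le_trans hz.2 h1⟩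
      exact ⟨ha.antitoneOn hzm hq hz.2, ha.antitoneOn hp hzm hz.1⟩
    · exact intermediate_value_Icc' hpq.le ((hC i).continuousOn)

lemma word_image (w : List (Fin 3)) :
    ∀ p q : ℝ, 0 ≤ p → p < q → q ≤ 1 →
    ∃ P Q : ℝ, 0 ≤ P ∧ P < Q ∧ Q ≤ 1 ∧ wordComp fs w '' Icc p q = Icc P Q := by
  induction w with
  | nil =>
    intro p q h0 hpq h1
    refine ⟨p, q, h0, hpq, h1, ?_⟩
    ext z; simp [wordComp_nil']
  | cons i u ih =>
    intro p q h0 hpq h1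
    obtain ⟨P', Q', h0', hpq', h1', himg'⟩ := letter_image hM hC hMono i h0 hpq h1
    obtain ⟨P, Q, hP0, hPQ, hQ1, himg⟩ := ih P' Q' h0' hpq' h1'
    refine ⟨P, Q, hP0, hPQ, hQ1, ?_⟩
    have hcomp : wordComp fs (i :: u) '' Icc p q = wordComp fs u '' (fs i '' Icc p q) := by
      rw [← Set.image_comp]
      congr 1
    rw [hcomp, himg', himg]

end WordImage

section OpenBasic

lemma open_basic (U : Set XSp) (hU : IsOpen U) (p : XSp) (hp : p ∈ U) :
    ∃ (N : ℕ) (ε : ℝ), 0 < ε ∧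
      {q : XSp | (∀ i : ℤ, |i| ≤ (N:ℤ) → q.1 i = p.1 i) ∧ |q.2.1 - p.2.1| < ε} ⊆ U := by
  have h1 : U ∈ nhds p := hU.mem_nhds hp
  rw [nhds_prod_eq, Filter.mem_prod_iff] at h1
  obtain ⟨A, hA, B, hB, hAB⟩ := h1
  rw [nhds_pi, Filter.mem_pi] at hA
  obtain ⟨I, hIfin, u, hu, hup⟩ := hA
  obtain ⟨ε, hε, hball⟩ := Metric.mem_nhds_iff.1 hB
  set J := hIfin.toFinset
  refine ⟨J.sup (fun i => i.natAbs), ε, hε, ?_⟩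
  rintro ⟨η, z⟩ ⟨hsym, hfib⟩
  apply hAB
  constructor
  · apply hup
    intro i hi
    have hiJ : i ∈ J := hIfin.mem_toFinset.2 hi
    have h2 : i.natAbs ≤ J.sup (fun i => i.natAbs) := Finset.le_sup hiJ
    have h3 : |i| ≤ ((J.sup fun i => i.natAbs : ℕ) : ℤ) := by
      rw [Int.abs_eq_natAbs]; exact_mod_cast h2
    have heq : η i = p.1 i := hsym i h3
    show η i ∈ u i
    rw [heq]
    exact mem_of_mem_nhds (hu i)
  · apply hball
    rw [Metric.mem_ball, Subtype.dist_eq]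
    exact hfib

end OpenBasic

end Aux

/-- `G` restricted to `Λ_G` is topologically transitive. -/
theorem stmt6 (f₀ f₁ f₂ : ℝ → ℝ) (β₀ lam₀ γ β₂ : ℝ)
    (h0 : F0cond f₀ β₀ lam₀) (h1 : F1cond f₁ γ lam₀) (h2 : F2cond f₂ β₂ lam₀)
    (h01 : F01cond f₀ β₀ lam₀ γ) :
    ∀ U V : Set XSp, IsOpen U → IsOpen V →
      (U ∩ LamG ![f₀, f₁, f₂]).Nonempty → (V ∩ LamG ![f₀, f₁, f₂]).Nonempty →
      ∃ n : ℕ,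
        ((Gmap ![f₀, f₁, f₂])^[n] '' (U ∩ LamG ![f₀, f₁, f₂]) ∩
          (V ∩ LamG ![f₀, f₁, f₂])).Nonempty := by
  obtain ⟨h0cd, h0map, h0mono, h0f0, h0f1, h0push, h0d0, h0β, h0d1, h0lam0, h0lam1, h0dlow⟩ := h0
  obtain ⟨h1f, h1γlam, h1γ1⟩ := h1
  obtain ⟨h2cd, h2map, h2mono, h2f0, h2d0, h2β, h2dlow, -⟩ := h2
  obtain ⟨hanti, hF01⟩ := h01
  intro U V hU hV hUne hVne
  set fs : Fin 3 → ℝ → ℝ := ![f₀, f₁, f₂] with hfsdef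
  have H : F0pack f₀ β₀ lam₀ :=
    ⟨h0cd, h0map, h0mono, h0f0, h0f1, h0push, h0d0, h0β, h0d1, h0lam0, h0lam1, h0dlow, hanti⟩
  have hγ0 : 0 < γ := lt_of_lt_of_le h0lam0 h1γlam
  have hfs0 : fs 0 = f₀ := rfl
  have hfs1 : fs 1 = fun x => γ * (1 - x) := by
    funext x
    show f₁ x = γ * (1 - x)
    exact h1f x
  have hfs2 : fs 2 = f₂ := rfl
  have hM : ∀ i, Set.MapsTo (fs i) (Icc 0 1) (Icc 0 1) := by
    intro i
    fin_cases i
    · exact h0map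
    · intro z hz
      show f₁ z ∈ Icc (0:ℝ) 1
      rw [h1f z]
      constructor
      · have : (0:ℝ) ≤ 1 - z := by linarith [hz.2]
        positivity
      · nlinarith [hz.1, hz.2]
    · exact h2map
  have hC : ∀ i, Continuous (fs i) := by
    intro i
    fin_cases i
    · exact h0cd.continuous
    · show Continuous f₁
      have hf1e : f₁ = fun x => γ * (1 - x) := funext h1f
      rw [hf1e]
      exact continuous_const.mul (continuous_const.sub continuous_id)
    · exact h2cd.continuous
  have hMono3 : ∀ i, StrictMonoOn (fs i) (Icc (0:ℝ) 1) ∨ StrictAntiOn (fs i) (Icc (0:ℝ) 1) := by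
    intro i
    fin_cases i
    · exact Or.inl h0mono
    · refine Or.inr ?_
      show StrictAntiOn f₁ (Icc (0:ℝ) 1)
      intro p hp q hq hpq
      rw [h1f p, h1f q]
      nlinarith
    · exact Or.inl h2mono
  -- open-set data
  obtain ⟨pU, hpUU, hpUΛ⟩ := hUne
  obtain ⟨pV, hpVV, hpVΛ⟩ := hVne
  obtain ⟨N, ε, hε, hUb⟩ := open_basic U hU pU hpUU
  obtain ⟨M, ρ, hρ, hVb⟩ := open_basic V hV pV hpVV
  obtain ⟨x₀, hx₀m, hx₀⟩ := (mem_LamG_iff hM).1 hpUΛ N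
  obtain ⟨y', hy'm, hy'⟩ := (mem_LamG_iff hM).1 hpVΛ M
  obtain ⟨P, Q, hP0, hPQ, hQ1, hIN⟩ :=
    word_image hM hC hMono3 (pastWord pU.1 N) 0 1 le_rfl one_pos le_rfl
  have hxPQ : pU.2.1 ∈ Icc P Q := by rw [← hIN]; exact ⟨x₀, hx₀m, hx₀⟩
  set a := max P (pU.2.1 - ε/2) with hadef
  set b := min Q (pU.2.1 + ε/2) with hbdef
  have hab : a < b := by
    apply max_lt
    · exact lt_min hPQ (by linarith [hxPQ.1])
    · exact lt_min (by linarith [hxPQ.2]) (by linarith)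
  have ha0 : 0 ≤ a := le_trans hP0 (le_max_left _ _)
  have hb1 : b ≤ 1 := le_trans (min_le_left _ _) hQ1
  -- forward word through the U-cylinder
  obtain ⟨a₁, b₁, ha₁0, hab₁, hb₁1, himg1⟩ :=
    word_image hM hC hMono3 (fwdWord pU.1 (N+1)) a b ha0 hab hb1
  -- continuity modulus for the past word of V
  have hTc : Continuous (wordComp fs (pastWord pV.1 M)) := wordComp_continuous hC _
  obtain ⟨ρ', hρ'pos, hρ'⟩ := Metric.continuous_iff.1 hTc y' ρ hρ
  -- the core reach
  obtain ⟨w, s, hsmem, hws⟩ := core_reach H hfs0 hfs1 hγ0 h1γ1 hF01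
    ha₁0 hab₁ hb₁1 hy'm.1 hy'm.2 hρ'pos
  -- pull s back to z₀ ∈ [a,b]
  have hs' : s ∈ wordComp fs (fwdWord pU.1 (N+1)) '' Icc a b := by rw [himg1]; exact hsmem
  obtain ⟨z₀, hz₀ab, hz₀s⟩ := hs'
  have hz₀01 : z₀ ∈ Icc (0:ℝ) 1 := ⟨le_trans ha0 hz₀ab.1, le_trans hz₀ab.2 hb1⟩
  have hz₀PQ : z₀ ∈ Icc P Q :=
    ⟨le_trans (le_max_left _ _) hz₀ab.1, le_trans hz₀ab.2 (min_le_left _ _)⟩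
  -- the connecting symbol sequence
  set Lw := w.length with hLw
  set n := (N+1) + Lw + M with hn
  have hnZ : (n:ℤ) = (N:ℤ) + 1 + Lw + M := by rw [hn]; push_cast; ring
  set ζ : Sig3 := fun j =>
    if j < -(N:ℤ) then (0:Fin 3)
    else if j ≤ (N:ℤ) then pU.1 j
    else if j < (N:ℤ) + 1 + (Lw:ℤ) then w.getD (j - ((N:ℤ)+1)).toNat 0
    else pV.1 (j - (n:ℤ)) with hζdef
  -- word along the first n symbols of ζ
  have hfwd : fwdWord ζ n = (fwdWord pU.1 (N+1) ++ w) ++ pastWord pV.1 M := by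
    apply List.ext_getElem
    · simp only [fwdWord, pastWord, List.length_ofFn, List.length_append, hn, hLw]
    · intro k h1k h2k
      have hkn : k < n := by simpa [fwdWord] using h1k
      simp only [fwdWord, List.getElem_ofFn]
      rcases lt_or_ge k (N+1) with hk1 | hk1
      · rw [List.getElem_append_left (by simp [fwdWord]; omega)]
        rw [List.getElem_append_left (by simp [fwdWord]; omega)]
        simp only [fwdWord, List.getElem_ofFn]
        show ζ k = pU.1 k
        rw [hζdef]
        simp only []
        rw [if_neg (by omega), if_pos (by omega)]
      · rcases lt_or_ge k (N+1+Lw) with hk2 | hk2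
        · rw [List.getElem_append_left (by simp [fwdWord]; omega)]
          rw [List.getElem_append_right (by simp [fwdWord]; omega)]
          show ζ k = _
          rw [hζdef]
          simp only []
          rw [if_neg (by omega), if_neg (by omega), if_pos (by push_cast; omega)]
          have hidx : ((k:ℤ) - ((N:ℤ)+1)).toNat = k - (N+1) := by omega
          rw [hidx]
          rw [List.getD_eq_getElem]
          · congr 1
            simp [fwdWord]
          · simp only [fwdWord, List.length_ofFn] at h2k ⊢
            omega
        · rw [List.getElem_append_right (by simp [fwdWord]; omega)]
          show ζ k = _
          rw [hζdef]
          simp only []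
          rw [if_neg (by omega), if_neg (by omega), if_neg (by push_cast; omega)]
          simp only [fwdWord, pastWord, List.getElem_ofFn, List.length_ofFn,
            List.length_append]
          refine congrArg pV.1 ?_
          rw [hnZ]
          omega
  -- the point over ζ lies in Λ
  have hu₀ : z₀ ∈ wordComp fs (pastWord pU.1 N) '' Icc 0 1 := by rw [hIN]; exact hz₀PQ
  obtain ⟨u₀, hu₀m, hu₀e⟩ := hu₀
  have hPtΛ : ((ζ, ⟨z₀, hz₀01⟩) : XSp) ∈ LamG fs := by
    apply (mem_LamG_iff hM).2
    intro m
    rcases le_or_gt m N with hmN | hmN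
    · -- pastWord ζ m = pastWord pU.1 m
      have hpw : pastWord ζ m = pastWord pU.1 m := by
        apply List.ext_getElem
        · simp [pastWord]
        · intro k h1k h2k
          simp only [pastWord, List.getElem_ofFn]
          show ζ _ = _
          rw [hζdef]
          simp only []
          have hkm : k < m := by simpa [pastWord] using h1k
          rw [if_neg (by omega), if_pos (by omega)]
      obtain ⟨r, hr⟩ : ∃ r, N = r + m := ⟨N - m, by omega⟩
      have hsplit : pastWord pU.1 N = pastWord (fun i => pU.1 (i - m)) r ++ pastWord pU.1 m := by
        rw [hr]; exact pastWord_append pU.1 m r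
      refine ⟨wordComp fs (pastWord (fun i => pU.1 (i - m)) r) u₀,
        wordComp_mapsTo hM _ hu₀m, ?_⟩
      rw [hpw]
      rw [← wordComp_append', ← hsplit, hu₀e]
    · -- m > N
      obtain ⟨r, hr⟩ : ∃ r, m = r + N := ⟨m - N, by omega⟩
      have hsplit2 : pastWord ζ m = List.replicate r 0 ++ pastWord pU.1 N := by
        apply List.ext_getElem
        · simp [pastWord, hr]
        · intro k h1k h2k
          have hkm : k < m := by simpa [pastWord] using h1k
          simp only [pastWord, List.getElem_ofFn]
          rcases lt_or_ge k r with hk1 | hk1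
          · rw [List.getElem_append_left (by simp; omega)]
            show ζ _ = _
            rw [hζdef]
            simp only []
            rw [if_pos (by omega)]
            simp
          · rw [List.getElem_append_right (by simp; omega)]
            show ζ _ = _
            rw [hζdef]
            simp only []
            rw [if_neg (by omega), if_pos (by omega)]
            simp only [pastWord, List.getElem_ofFn, List.length_replicate]
            refine congrArg pU.1 ?_
            omega
      -- find an r-step f₀-preimage of u₀
      have hsurj : u₀ ∈ f₀^[r] '' Icc 0 1 := by
        rw [H.iter_image r le_rfl zero_le_one le_rfl, (H.iter_zero_one r).1,
          (H.iter_zero_one r).2]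
        exact hu₀m
      obtain ⟨y₁, hy₁m, hy₁e⟩ := hsurj
      refine ⟨y₁, hy₁m, ?_⟩
      rw [hsplit2, wordComp_append', wordComp_replicate' hfs0, hy₁e, hu₀e]
  -- the point lies in U
  have hPtU : ((ζ, ⟨z₀, hz₀01⟩) : XSp) ∈ U := by
    apply hUb
    constructor
    · intro i hi
      have hi' := abs_le.1 hi
      show ζ i = pU.1 i
      rw [hζdef]
      simp only []
      rw [if_neg (by omega), if_pos (by omega)]
    · show |z₀ - pU.2.1| < ε
      have h1 : pU.2.1 - ε/2 ≤ z₀ := le_trans (le_max_right _ _) hz₀ab.1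
      have h2 : z₀ ≤ pU.2.1 + ε/2 := le_trans hz₀ab.2 (min_le_right _ _)
      rw [abs_lt]
      constructor <;> linarith
  -- the image point
  have hGn := Gmap_iter hM n ζ ⟨z₀, hz₀01⟩
  have hF : wordComp fs (fwdWord ζ n) z₀
      = wordComp fs (pastWord pV.1 M) (wordComp fs w s) := by
    rw [hfwd, wordComp_append', wordComp_append', hz₀s]
  have hFmem : wordComp fs (fwdWord ζ n) z₀ ∈ Icc (0:ℝ) 1 := wordComp_mapsTo hM _ hz₀01
  have hQtV : (Gmap fs)^[n] ((ζ, ⟨z₀, hz₀01⟩) : XSp) ∈ V := by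
    rw [hGn]
    apply hVb
    constructor
    · intro i hi
      have hi' := abs_le.1 hi
      show ζ (i + n) = pV.1 i
      rw [hζdef]
      simp only []
      rw [if_neg (by rw [hnZ] at *; omega), if_neg (by rw [hnZ] at *; omega),
        if_neg (by rw [hnZ] at *; push_cast; omega)]
      exact congrArg pV.1 (by omega)
    · show |(Set.projIcc (0:ℝ) 1 (by norm_num) (wordComp fs (fwdWord ζ n) z₀) : ℝ)
          - pV.2.1| < ρ
      rw [Set.projIcc_of_mem _ hFmem]
      show |wordComp fs (fwdWord ζ n) z₀ - pV.2.1| < ρ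
      rw [hF]
      have hd := hρ' (wordComp fs w s) (by rwa [Real.dist_eq])
      rw [Real.dist_eq, hy'] at hd
      exact hd
  have hQtΛ : (Gmap fs)^[n] ((ζ, ⟨z₀, hz₀01⟩) : XSp) ∈ LamG fs := LamG_fwd hPtΛ n
  exact ⟨n, (Gmap fs)^[n] (ζ, ⟨z₀, hz₀01⟩),
    ⟨(ζ, ⟨z₀, hz₀01⟩), ⟨hPtU, hPtΛ⟩, rfl⟩, hQtV, hQtΛ⟩

end
end
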